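/- arXiv:2110.03755 — 3 statements merged into one kernel-verified Lean document; each statement's English description precedes it below -/
import Mathlib

section
/- Let ε > 0, γ ≥ 1, and let 𝒫 = 𝒫^{ε,γ}_{m,n} be the polynomial frame approximation with range ℙ^{ε,γ}_{m,n} = span{ξ_i : σ_i > ε}. Define C₁ = sup{ ‖p‖_{[−1,1],∞} : p ∈ ℙ^{ε,γ}_{m,n}, ‖p‖_{m,∞} ≤ 1 } and C₂ = sup{ ‖p − 𝒫(p)‖_{[−1,1],∞} : p ∈ ℙ_n, ‖p‖_{[−γ,γ],∞} ≤ 1/ε }. Then for every f ∈ C([−1,1]) and every p ∈ ℙ_n: ‖f − 𝒫(f)‖_{[−1,1],∞} ≤ (1 + √(m+1)·C₁)·‖f − p‖_{[−1,1],∞} + C₂·ε·‖p‖_{[−γ,γ],∞}. Moreover, the condition number satisfies C₁ ≤ κ(𝒫) ≤ √(m+1)·C₁. -/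
open Polynomial Set

noncomputable section

/-- The `m+1` equispaced nodes in `[-1,1]`: `x_i = -1 + 2i/m`. -/
def eqNode (m i : ℕ) : ℝ := -1 + 2 * i / m

/-- Evaluation of a complex polynomial at real points. -/
def pEval (p : Polynomial ℂ) : ℝ → ℂ := fun x => p.eval (x : ℂ)

/-- Uniform norm of a function on `[a,b]`. -/
def supNorm (a b : ℝ) (f : ℝ → ℂ) : ℝ := ⨆ x : Icc a b, ‖f (x : ℝ)‖

/-- Discrete uniform seminorm over the equispaced grid. -/
def mSup (m : ℕ) (f : ℝ → ℂ) : ℝ := ⨆ i : Fin (m + 1), ‖f (eqNode m i)‖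

/-- Discrete semi-inner product over the equispaced grid. -/
def mInner (m : ℕ) (f g : ℝ → ℂ) : ℂ :=
  (2 / (m + 1)) * ∑ i : Fin (m + 1), f (eqNode m i) * (starRingEnd ℂ) (g (eqNode m i))

/-- Discrete 2-seminorm over the equispaced grid. -/
def mNorm2 (m : ℕ) (f : ℝ → ℂ) : ℝ := Real.sqrt (mInner m f f).re

/-- `L²` inner product on `[a,b]`. -/
def innerI (a b : ℝ) (f g : ℝ → ℂ) : ℂ := ∫ x in a..b, f x * (starRingEnd ℂ) (g x)

/-- `L²` norm on `[a,b]`. -/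
def l2Norm (a b : ℝ) (f : ℝ → ℂ) : ℝ := Real.sqrt (innerI a b f f).re

/-- The polynomial frame approximation built from a doubly orthogonal family. -/
def PFA (m n : ℕ) (ε : ℝ) (ξ : Fin (n + 1) → Polynomial ℂ) (σ : Fin (n + 1) → ℝ)
    (f : ℝ → ℂ) : Polynomial ℂ :=
  ∑ i : Fin (n + 1),
    if ε < σ i then Polynomial.C (mInner m f (pEval (ξ i)) / ((σ i : ℂ)) ^ 2) * ξ i else 0

/-- The Bernstein ellipse with parameter `θ`. -/
def BE (θ : ℝ) : Set ℂ := {w | ∃ z : ℂ, 1 ≤ ‖z‖ ∧ ‖z‖ ≤ θ ∧ w = (z + z⁻¹) / 2}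

/-- Uniform norm over a subset of `ℂ`. -/
def supOn (S : Set ℂ) (f : ℂ → ℂ) : ℝ := ⨆ z : S, ‖f (z : ℂ)‖

/-- Condition number of a linear approximation map. -/
def kappaLin (m : ℕ) (R : (ℝ → ℂ) → (ℝ → ℂ)) : ℝ :=
  sSup {r | ∃ f : ℝ → ℂ, ContinuousOn f (Icc (-1) 1) ∧ mSup m f ≠ 0 ∧
    r = supNorm (-1) 1 (R f) / mSup m f}

/-- Condition number of a general (possibly nonlinear) approximation map. -/
def kappaGen (m : ℕ) (R : (ℝ → ℂ) → (ℝ → ℂ)) : ℝ :=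
  ⨆ f : {f : ℝ → ℂ // ContinuousOn f (Icc (-1) 1)},
    ⨅ δ : {d : ℝ // 0 < d},
      sSup {r | ∃ h : ℝ → ℂ, ContinuousOn h (Icc (-1) 1) ∧ 0 < mSup m h ∧ mSup m h ≤ δ.1 ∧
        r = supNorm (-1) 1 (fun x => R (f.1 + h) x - R f.1 x) / mSup m h}

/-- `C^k` norm on `[-1,1]`. -/
def ckNorm (k : ℕ) (f : ℝ → ℂ) : ℝ :=
  ⨆ j : Fin (k + 1), supNorm (-1) 1 (iteratedDerivWithin (j : ℕ) f (Icc (-1) 1))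
section Basics

variable {a b : ℝ} {f g : ℝ → ℂ} {m : ℕ}

instance iccNE : Nonempty (Icc (-1:ℝ) 1) := ⟨⟨0, by norm_num⟩⟩

lemma bddA (hf : ContinuousOn f (Icc a b)) :
    BddAbove (Set.range fun x : Icc a b => ‖f x‖) := by
  obtain ⟨C, hC⟩ := (isCompact_Icc.image_of_continuousOn
    (continuous_norm.comp_continuousOn hf)).bddAbove
  exact ⟨C, by rintro r ⟨x, rfl⟩; exact hC ⟨x.1, x.2, rfl⟩⟩

lemma le_supNorm (hf : ContinuousOn f (Icc a b)) {x : ℝ} (hx : x ∈ Icc a b) :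
    ‖f x‖ ≤ supNorm a b f :=
  le_ciSup (bddA hf) (⟨x, hx⟩ : Icc a b)

lemma supNorm_le {c : ℝ} (hc : 0 ≤ c) (h : ∀ x ∈ Icc a b, ‖f x‖ ≤ c) :
    supNorm a b f ≤ c :=
  Real.iSup_le (fun x => h x x.2) hc

lemma supNorm_nonneg : 0 ≤ supNorm a b f :=
  Real.iSup_nonneg fun _ => norm_nonneg _

lemma supNorm_congr (h : ∀ x ∈ Icc a b, f x = g x) : supNorm a b f = supNorm a b g := by
  unfold _root_.supNorm
  congr 1; funext x; rw [h x x.2]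

lemma supNorm_zero : supNorm a b (fun _ => (0:ℂ)) = 0 :=
  le_antisymm (supNorm_le le_rfl (by simp)) supNorm_nonneg

lemma le_mSup (i : Fin (m+1)) : ‖f (eqNode m i)‖ ≤ mSup m f :=
  le_ciSup (Set.Finite.bddAbove (Set.finite_range (fun i : Fin (m+1) => ‖f (eqNode m i)‖))) i

lemma mSup_le {c : ℝ} (hc : 0 ≤ c) (h : ∀ i : Fin (m+1), ‖f (eqNode m i)‖ ≤ c) :
    mSup m f ≤ c := Real.iSup_le h hc

lemma mSup_nonneg : 0 ≤ mSup m f := Real.iSup_nonneg fun _ => norm_nonneg _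

lemma eqNode_mem (hm : 1 ≤ m) (i : Fin (m+1)) : eqNode m i ∈ Icc (-1:ℝ) 1 := by
  have hm' : (0:ℝ) < m := by exact_mod_cast hm
  have hi : (i:ℝ) ≤ m := by exact_mod_cast Nat.lt_succ_iff.mp i.2
  constructor
  · have : (0:ℝ) ≤ 2 * i / m := by positivity
    unfold eqNode; linarith
  · unfold eqNode
    have h2 : 2 * (i:ℝ) / m ≤ 2 := by
      rw [div_le_iff₀ hm']; nlinarith [hi]
    linarith

lemma mSup_le_supNorm (hm : 1 ≤ m) (hf : ContinuousOn f (Icc (-1) 1)) :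
    mSup m f ≤ supNorm (-1) 1 f :=
  mSup_le supNorm_nonneg fun i => le_supNorm hf (eqNode_mem hm i)

end Basics
section InnerLemmas

variable {m : ℕ} {f g h : ℝ → ℂ}

lemma mInner_self_re :
    (mInner m f f).re = (2/(m+1) : ℝ) * ∑ i : Fin (m+1), Complex.normSq (f (eqNode m i)) := by
  unfold mInner
  have : (2 / ((m:ℂ) + 1)) = (((2/(m+1) : ℝ)) : ℂ) := by push_cast; ring
  rw [this, Complex.re_ofReal_mul]
  congr 1
  rw [Complex.re_sum]
  apply Finset.sum_congr rfl
  intro i _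
  rw [Complex.mul_conj]
  simp

lemma mone_pos : (0:ℝ) < 2/(m+1) := by positivity

lemma mInner_self_nonneg : 0 ≤ (mInner m f f).re := by
  rw [mInner_self_re]
  have : 0 ≤ ∑ i : Fin (m+1), Complex.normSq (f (eqNode m i)) :=
    Finset.sum_nonneg fun i _ => Complex.normSq_nonneg _
  positivity

lemma mInner_self_le : (mInner m f f).re ≤ 2 * (mSup m f)^2 := by
  rw [mInner_self_re]
  have hb : ∀ i : Fin (m+1), Complex.normSq (f (eqNode m i)) ≤ (mSup m f)^2 := by
    intro i
    rw [← Complex.sq_norm]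
    exact pow_le_pow_left₀ (norm_nonneg _) (le_mSup i) 2
  calc (2/(m+1) : ℝ) * ∑ i : Fin (m+1), Complex.normSq (f (eqNode m i))
      ≤ (2/(m+1) : ℝ) * ((m+1) * (mSup m f)^2) := by
        apply mul_le_mul_of_nonneg_left _ (le_of_lt mone_pos)
        calc ∑ i : Fin (m+1), Complex.normSq (f (eqNode m i))
            ≤ ∑ _i : Fin (m+1), (mSup m f)^2 := Finset.sum_le_sum fun i _ => hb i
          _ = (m+1) * (mSup m f)^2 := by
              rw [Finset.sum_const, Finset.card_univ, Fintype.card_fin]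
              ring
    _ = 2 * (mSup m f)^2 := by
        have hne : (m:ℝ) + 1 ≠ 0 := by positivity
        field_simp
  
lemma normSq_le_mInner (j : Fin (m+1)) :
    Complex.normSq (f (eqNode m j)) ≤ ((m+1)/2 : ℝ) * (mInner m f f).re := by
  rw [mInner_self_re]
  have hs : Complex.normSq (f (eqNode m j)) ≤ ∑ i : Fin (m+1), Complex.normSq (f (eqNode m i)) :=
    Finset.single_le_sum (f := fun i : Fin (m+1) => Complex.normSq (f (eqNode m i)))
      (fun i _ => Complex.normSq_nonneg _) (Finset.mem_univ j)
  have hme : ((m+1)/2 : ℝ) * ((2/(m+1) : ℝ) * ∑ i : Fin (m+1), Complex.normSq (f (eqNode m i)))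
      = ∑ i : Fin (m+1), Complex.normSq (f (eqNode m i)) := by
    have hne : (m:ℝ) + 1 ≠ 0 := by positivity
    field_simp
  linarith [hme]

lemma mInner_conj : mInner m g f = (starRingEnd ℂ) (mInner m f g) := by
  unfold mInner
  rw [map_mul, map_sum]
  congr 1
  · rw [map_div₀]
    congr 1
    · exact (map_ofNat (starRingEnd ℂ) 2).symm
    · rw [map_add, map_one, Complex.conj_natCast]
  · apply Finset.sum_congr rfl
    intro i _
    rw [map_mul]
    simp [mul_comm]

lemma mInner_sub_left : mInner m (fun x => f x - g x) h = mInner m f h - mInner m g h := by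
  unfold mInner
  rw [← mul_sub, ← Finset.sum_sub_distrib]
  congr 1
  apply Finset.sum_congr rfl
  intro i _
  ring

lemma mInner_sub_right : mInner m h (fun x => f x - g x) = mInner m h f - mInner m h g := by
  rw [mInner_conj, mInner_sub_left, map_sub, ← mInner_conj, ← mInner_conj]

lemma mInner_smul_left {c : ℂ} : mInner m (fun x => c * f x) h = c * mInner m f h := by
  unfold mInner
  have : (∑ i : Fin (m+1), (fun x => c * f x) (eqNode m i) * (starRingEnd ℂ) (h (eqNode m i)))
      = c * ∑ i : Fin (m+1), f (eqNode m i) * (starRingEnd ℂ) (h (eqNode m i)) := by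
    rw [Finset.mul_sum]
    apply Finset.sum_congr rfl
    intro i _
    ring
  rw [this]
  ring

lemma mInner_sum_smul_left {n : ℕ} (d : Fin (n+1) → ℂ) (u : Fin (n+1) → ℝ → ℂ) :
    mInner m (fun x => ∑ i : Fin (n+1), d i * u i x) h
      = ∑ i : Fin (n+1), d i * mInner m (u i) h := by
  unfold mInner
  have : (∑ i : Fin (m+1), (fun x => ∑ j : Fin (n+1), d j * u j x) (eqNode m i)
        * (starRingEnd ℂ) (h (eqNode m i)))
      = ∑ j : Fin (n+1), d j * ∑ i : Fin (m+1), u j (eqNode m i) * (starRingEnd ℂ) (h (eqNode m i)) := by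
    have step1 : (∑ i : Fin (m+1), (fun x => ∑ j : Fin (n+1), d j * u j x) (eqNode m i)
          * (starRingEnd ℂ) (h (eqNode m i)))
        = ∑ i : Fin (m+1), ∑ j : Fin (n+1),
            d j * u j (eqNode m i) * (starRingEnd ℂ) (h (eqNode m i)) := by
      apply Finset.sum_congr rfl
      intro i _
      simp only
      rw [Finset.sum_mul]
    rw [step1, Finset.sum_comm]
    apply Finset.sum_congr rfl
    intro j _
    rw [Finset.mul_sum]
    apply Finset.sum_congr rfl
    intro i _
    ring
  rw [this, Finset.mul_sum]
  apply Finset.sum_congr rfl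
  intro j _
  ring

lemma mInner_sum_smul_right {n : ℕ} (d : Fin (n+1) → ℂ) (u : Fin (n+1) → ℝ → ℂ) :
    mInner m h (fun x => ∑ i : Fin (n+1), d i * u i x)
      = ∑ i : Fin (n+1), (starRingEnd ℂ) (d i) * mInner m h (u i) := by
  rw [mInner_conj, mInner_sum_smul_left, map_sum]
  apply Finset.sum_congr rfl
  intro i _
  rw [map_mul, ← mInner_conj]

end InnerLemmas
/-- Coefficient of the frame approximation. -/
def dcoef (m n : ℕ) (ε : ℝ) (ξ : Fin (n+1) → Polynomial ℂ) (σ : Fin (n+1) → ℝ)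
    (f : ℝ → ℂ) (i : Fin (n+1)) : ℂ :=
  if ε < σ i then mInner m f (pEval (ξ i)) / ((σ i : ℂ))^2 else 0

section PFALemmas

variable {m n : ℕ} {ε : ℝ} {ξ : Fin (n+1) → Polynomial ℂ} {σ : Fin (n+1) → ℝ}
  {f g : ℝ → ℂ}

lemma cont_pEval (p : Polynomial ℂ) : Continuous (pEval p) :=
  p.continuous.comp Complex.continuous_ofReal

lemma PFA_eq : PFA m n ε ξ σ f = ∑ i : Fin (n+1), Polynomial.C (dcoef m n ε ξ σ f i) * ξ i := by
  unfold PFA dcoef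
  apply Finset.sum_congr rfl
  intro i _
  by_cases hi : ε < σ i <;> simp [hi]

lemma pEval_PFA :
    pEval (PFA m n ε ξ σ f) = fun x => ∑ i : Fin (n+1), dcoef m n ε ξ σ f i * pEval (ξ i) x := by
  funext x
  rw [PFA_eq]
  unfold pEval
  rw [Polynomial.eval_finset_sum]
  apply Finset.sum_congr rfl
  intro i _
  rw [Polynomial.eval_mul, Polynomial.eval_C]

lemma mInner_PFA_left :
    mInner m (pEval (PFA m n ε ξ σ f)) g
      = ∑ i : Fin (n+1), dcoef m n ε ξ σ f i * mInner m (pEval (ξ i)) g := by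
  rw [pEval_PFA]
  exact mInner_sum_smul_left _ _

lemma mInner_PFA_right :
    mInner m g (pEval (PFA m n ε ξ σ f))
      = ∑ i : Fin (n+1), (starRingEnd ℂ) (dcoef m n ε ξ σ f i) * mInner m g (pEval (ξ i)) := by
  rw [pEval_PFA]
  exact mInner_sum_smul_right _ _

variable (horthm : ∀ i j, mInner m (pEval (ξ i)) (pEval (ξ j)) =
      if i = j then ((σ i : ℂ)) ^ 2 else 0)

include horthm

lemma mInner_PFA_xi (j : Fin (n+1)) :
    mInner m (pEval (PFA m n ε ξ σ f)) (pEval (ξ j)) = dcoef m n ε ξ σ f j * ((σ j : ℂ))^2 := by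
  rw [mInner_PFA_left]
  rw [Finset.sum_eq_single j]
  · rw [horthm j j]; simp
  · intro i _ hij
    rw [horthm i j, if_neg hij, mul_zero]
  · intro hj; exact absurd (Finset.mem_univ j) hj

lemma mInner_PFA_PFA :
    mInner m (pEval (PFA m n ε ξ σ f)) (pEval (PFA m n ε ξ σ f))
      = ((∑ j : Fin (n+1), Complex.normSq (dcoef m n ε ξ σ f j) * (σ j)^2 : ℝ) : ℂ) := by
  rw [mInner_PFA_right]
  push_cast
  apply Finset.sum_congr rfl
  intro j _
  rw [mInner_PFA_xi horthm, ← mul_assoc, mul_comm ((starRingEnd ℂ) _) _, Complex.mul_conj]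

lemma mInner_f_PFA (hε : 0 < ε) :
    mInner m f (pEval (PFA m n ε ξ σ f))
      = ((∑ j : Fin (n+1), Complex.normSq (dcoef m n ε ξ σ f j) * (σ j)^2 : ℝ) : ℂ) := by
  rw [mInner_PFA_right]
  push_cast
  apply Finset.sum_congr rfl
  intro j _
  unfold dcoef
  by_cases hj : ε < σ j
  · rw [if_pos hj]
    have hσj : ((σ j : ℂ))^2 ≠ 0 := by
      apply pow_ne_zero
      exact Complex.ofReal_ne_zero.mpr (lt_trans hε hj).ne'
    set a := mInner m f (pEval (ξ j)) with ha
    have key : (starRingEnd ℂ) (a / ((σ j:ℂ))^2) * a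
        = (starRingEnd ℂ) (a / ((σ j:ℂ))^2) * (a / ((σ j:ℂ))^2) * ((σ j:ℂ))^2 := by
      rw [mul_assoc, div_mul_cancel₀ _ hσj]
    rw [key, mul_comm ((starRingEnd ℂ) _) _, Complex.mul_conj]
  · rw [if_neg hj]; simp

end PFALemmas
section Bessel

variable {m n : ℕ} {ε : ℝ} {ξ : Fin (n+1) → Polynomial ℂ} {σ : Fin (n+1) → ℝ}
  {f g : ℝ → ℂ}

variable (horthm : ∀ i j, mInner m (pEval (ξ i)) (pEval (ξ j)) =
      if i = j then ((σ i : ℂ)) ^ 2 else 0)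

include horthm

lemma bessel (hε : 0 < ε) :
    (mInner m (pEval (PFA m n ε ξ σ f)) (pEval (PFA m n ε ξ σ f))).re ≤ (mInner m f f).re := by
  set Pf := pEval (PFA m n ε ξ σ f) with hPf
  have h0 : 0 ≤ (mInner m (fun x => f x - Pf x) (fun x => f x - Pf x)).re :=
    mInner_self_nonneg
  have hexp : mInner m (fun x => f x - Pf x) (fun x => f x - Pf x)
      = mInner m f f - mInner m f Pf - (mInner m Pf f - mInner m Pf Pf) := by
    rw [mInner_sub_left, mInner_sub_right, mInner_sub_right]
  have hT : mInner m f Pf = mInner m Pf Pf := by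
    rw [hPf, mInner_f_PFA horthm hε, mInner_PFA_PFA horthm]
  have hconj : mInner m Pf f = (starRingEnd ℂ) (mInner m f Pf) := mInner_conj
  have hreal : (mInner m Pf f).re = (mInner m f Pf).re := by
    rw [hconj, Complex.conj_re]
  rw [hexp] at h0
  simp only [Complex.sub_re] at h0
  have hTre : (mInner m f Pf).re = (mInner m Pf Pf).re := congrArg Complex.re hT
  linarith [h0, hreal, hTre]

lemma mSup_PFA (hε : 0 < ε) :
    mSup m (pEval (PFA m n ε ξ σ f)) ≤ Real.sqrt (m+1) * mSup m f := by
  have hb : ∀ j : Fin (m+1),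
      ‖pEval (PFA m n ε ξ σ f) (eqNode m j)‖ ≤ Real.sqrt (m+1) * mSup m f := by
    intro j
    have h1 : Complex.normSq (pEval (PFA m n ε ξ σ f) (eqNode m j))
        ≤ ((m+1)/2 : ℝ) * (mInner m (pEval (PFA m n ε ξ σ f)) (pEval (PFA m n ε ξ σ f))).re :=
      normSq_le_mInner j
    have h2 := bessel (f := f) horthm hε
    have h3 : (mInner m f f).re ≤ 2 * (mSup m f)^2 := mInner_self_le
    have h4 : Complex.normSq (pEval (PFA m n ε ξ σ f) (eqNode m j))
        ≤ (m+1) * (mSup m f)^2 := by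
      have hmp : (0:ℝ) ≤ (m+1)/2 := by positivity
      nlinarith [h1, h2, h3]
    rw [Complex.norm_def]
    calc Real.sqrt (Complex.normSq (pEval (PFA m n ε ξ σ f) (eqNode m j)))
        ≤ Real.sqrt ((m+1) * (mSup m f)^2) := Real.sqrt_le_sqrt h4
      _ = Real.sqrt (m+1) * mSup m f := by
          rw [Real.sqrt_mul (by positivity) _, Real.sqrt_sq mSup_nonneg]
  exact mSup_le (mul_nonneg (Real.sqrt_nonneg _) mSup_nonneg) hb

lemma dcoef_abs_bound (hε : 0 < ε) (j : Fin (n+1)) :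
    ‖dcoef m n ε ξ σ f j‖ ≤ Real.sqrt 2 * mSup m f / ε := by
  by_cases hj : ε < σ j
  · have hterm : Complex.normSq (dcoef m n ε ξ σ f j) * (σ j)^2
        ≤ (mInner m (pEval (PFA m n ε ξ σ f)) (pEval (PFA m n ε ξ σ f))).re := by
      rw [mInner_PFA_PFA horthm, Complex.ofReal_re]
      exact Finset.single_le_sum
        (f := fun i : Fin (n+1) => Complex.normSq (dcoef m n ε ξ σ f i) * (σ i)^2)
        (fun i _ => mul_nonneg (Complex.normSq_nonneg _) (sq_nonneg _)) (Finset.mem_univ j)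
    have h2 := bessel (f := f) horthm hε
    have h3 : (mInner m f f).re ≤ 2 * (mSup m f)^2 := mInner_self_le
    have habs : (‖dcoef m n ε ξ σ f j‖)^2 * (σ j)^2 ≤ 2 * (mSup m f)^2 := by
      rw [Complex.sq_norm]; linarith
    have hσ : 0 < σ j := lt_trans hε hj
    have hkey : ‖dcoef m n ε ξ σ f j‖ * σ j ≤ Real.sqrt 2 * mSup m f := by
      have hsq : (‖dcoef m n ε ξ σ f j‖ * σ j)^2 ≤ (Real.sqrt 2 * mSup m f)^2 := by
        rw [mul_pow, mul_pow, Real.sq_sqrt (by norm_num : (0:ℝ) ≤ 2)]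
        calc (‖dcoef m n ε ξ σ f j‖)^2 * (σ j)^2 ≤ 2 * (mSup m f)^2 := habs
          _ = 2 * (mSup m f)^2 := rfl
      have h1 : 0 ≤ ‖dcoef m n ε ξ σ f j‖ * σ j :=
        mul_nonneg (norm_nonneg _) hσ.le
      have h2' : 0 ≤ Real.sqrt 2 * mSup m f := mul_nonneg (Real.sqrt_nonneg 2) mSup_nonneg
      nlinarith [hsq, h1, h2']
    calc ‖dcoef m n ε ξ σ f j‖
        = ‖dcoef m n ε ξ σ f j‖ * σ j / σ j := by field_simp
      _ ≤ (Real.sqrt 2 * mSup m f) / σ j := by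
          exact div_le_div_of_nonneg_right hkey hσ.le
      _ ≤ Real.sqrt 2 * mSup m f / ε := by
          exact div_le_div_of_nonneg_left (mul_nonneg (Real.sqrt_nonneg 2) mSup_nonneg) hε hj.le
  · unfold dcoef
    rw [if_neg hj]
    simp only [norm_zero]
    exact div_nonneg (mul_nonneg (Real.sqrt_nonneg 2) mSup_nonneg) hε.le

lemma supNorm_PFA (hε : 0 < ε) :
    supNorm (-1) 1 (pEval (PFA m n ε ξ σ f))
      ≤ Real.sqrt 2 / ε * (∑ i : Fin (n+1), supNorm (-1) 1 (pEval (ξ i))) * mSup m f := by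
  have hK : 0 ≤ ∑ i : Fin (n+1), supNorm (-1) 1 (pEval (ξ i)) :=
    Finset.sum_nonneg fun i _ => supNorm_nonneg
  apply supNorm_le (mul_nonneg (mul_nonneg (div_nonneg (Real.sqrt_nonneg 2) hε.le) hK) mSup_nonneg)
  intro x hx
  rw [pEval_PFA]
  calc ‖∑ i : Fin (n+1), dcoef m n ε ξ σ f i * pEval (ξ i) x‖
      ≤ ∑ i : Fin (n+1), ‖dcoef m n ε ξ σ f i * pEval (ξ i) x‖ := by
        exact norm_sum_le _ _
    _ ≤ ∑ i : Fin (n+1), (Real.sqrt 2 * mSup m f / ε) * supNorm (-1) 1 (pEval (ξ i)) := by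
        apply Finset.sum_le_sum
        intro i _
        rw [norm_mul]
        exact mul_le_mul (dcoef_abs_bound horthm hε i)
          (le_supNorm (cont_pEval (ξ i)).continuousOn hx)
          (norm_nonneg _) (div_nonneg (mul_nonneg (Real.sqrt_nonneg 2) mSup_nonneg) hε.le)
    _ = Real.sqrt 2 / ε * (∑ i : Fin (n+1), supNorm (-1) 1 (pEval (ξ i))) * mSup m f := by
        rw [← Finset.mul_sum]
        ring

end Bessel
section Linearity

variable {m n : ℕ} {ε : ℝ} {ξ : Fin (n+1) → Polynomial ℂ} {σ : Fin (n+1) → ℝ}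
  {f g : ℝ → ℂ}

lemma mInner_zero_left {h : ℝ → ℂ} : mInner m (fun _ => (0:ℂ)) h = 0 := by
  unfold mInner; simp

lemma dcoef_sub :
    dcoef m n ε ξ σ (fun x => f x - g x) = fun i => dcoef m n ε ξ σ f i - dcoef m n ε ξ σ g i := by
  funext i
  unfold dcoef
  by_cases hi : ε < σ i
  · rw [if_pos hi, if_pos hi, if_pos hi, mInner_sub_left, sub_div]
  · rw [if_neg hi, if_neg hi, if_neg hi, sub_zero]

lemma dcoef_smul {c : ℂ} :
    dcoef m n ε ξ σ (fun x => c * f x) = fun i => c * dcoef m n ε ξ σ f i := by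
  funext i
  unfold dcoef
  by_cases hi : ε < σ i
  · rw [if_pos hi, if_pos hi, mInner_smul_left, mul_div_assoc]
  · rw [if_neg hi, if_neg hi, mul_zero]

lemma PFA_sub :
    PFA m n ε ξ σ (fun x => f x - g x) = PFA m n ε ξ σ f - PFA m n ε ξ σ g := by
  rw [PFA_eq, PFA_eq, PFA_eq, ← Finset.sum_sub_distrib]
  apply Finset.sum_congr rfl
  intro i _
  rw [dcoef_sub]
  simp only
  rw [map_sub, sub_mul]

lemma PFA_smul {c : ℂ} :
    PFA m n ε ξ σ (fun x => c * f x) = Polynomial.C c * PFA m n ε ξ σ f := by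
  rw [PFA_eq, PFA_eq, Finset.mul_sum]
  apply Finset.sum_congr rfl
  intro i _
  rw [dcoef_smul]
  simp only
  rw [map_mul, mul_assoc]

lemma PFA_zero : PFA m n ε ξ σ (fun _ => (0:ℂ)) = 0 := by
  rw [PFA_eq]
  apply Finset.sum_eq_zero
  intro i _
  have : dcoef m n ε ξ σ (fun _ => (0:ℂ)) i = 0 := by
    unfold dcoef
    by_cases hi : ε < σ i
    · rw [if_pos hi, mInner_zero_left, zero_div]
    · rw [if_neg hi]
  rw [this, map_zero, zero_mul]

lemma PFA_add :
    PFA m n ε ξ σ (fun x => f x + g x) = PFA m n ε ξ σ f + PFA m n ε ξ σ g := by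
  have : (fun x => f x + g x) = fun x => f x - (0 - g x) := by funext x; ring
  rw [this]
  have h2 : PFA m n ε ξ σ (fun x => (0:ℂ) - g x)
      = PFA m n ε ξ σ (fun _ => (0:ℂ)) - PFA m n ε ξ σ g := PFA_sub
  rw [PFA_sub, h2, PFA_zero]
  ring

lemma PFA_mem_span :
    PFA m n ε ξ σ f ∈ Submodule.span ℂ {q : Polynomial ℂ | ∃ i, ε < σ i ∧ q = ξ i} := by
  unfold PFA
  apply Submodule.sum_mem
  intro i _
  by_cases hi : ε < σ i
  · rw [if_pos hi]
    have hmem : ξ i ∈ Submodule.span ℂ {q : Polynomial ℂ | ∃ i, ε < σ i ∧ q = ξ i} :=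
      Submodule.subset_span ⟨i, hi, rfl⟩
    have : Polynomial.C (mInner m f (pEval (ξ i)) / ((σ i : ℂ)) ^ 2) * ξ i
        = (mInner m f (pEval (ξ i)) / ((σ i : ℂ)) ^ 2) • ξ i := by
      rw [Polynomial.smul_eq_C_mul]
    rw [this]
    exact Submodule.smul_mem _ _ hmem
  · rw [if_neg hi]
    exact Submodule.zero_mem _

variable (horthm : ∀ i j, mInner m (pEval (ξ i)) (pEval (ξ j)) =
      if i = j then ((σ i : ℂ)) ^ 2 else 0)

include horthm

lemma PFA_generator (hε : 0 < ε) {j : Fin (n+1)} (hj : ε < σ j) :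
    PFA m n ε ξ σ (pEval (ξ j)) = ξ j := by
  rw [PFA_eq]
  rw [Finset.sum_eq_single j]
  · have : dcoef m n ε ξ σ (pEval (ξ j)) j = 1 := by
      unfold dcoef
      rw [if_pos hj, horthm j j, if_pos rfl]
      have hσj : ((σ j : ℂ))^2 ≠ 0 :=
        pow_ne_zero _ (Complex.ofReal_ne_zero.mpr (lt_trans hε hj).ne')
      exact div_self hσj
    rw [this, map_one, one_mul]
  · intro i _ hij
    have : dcoef m n ε ξ σ (pEval (ξ j)) i = 0 := by
      unfold dcoef
      by_cases hi : ε < σ i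
      · rw [if_pos hi, horthm j i, if_neg (fun h => hij h.symm), zero_div]
      · rw [if_neg hi]
    rw [this, map_zero, zero_mul]
  · intro hj'; exact absurd (Finset.mem_univ j) hj'

lemma PFA_proj (hε : 0 < ε) {q : Polynomial ℂ}
    (hq : q ∈ Submodule.span ℂ {p : Polynomial ℂ | ∃ i, ε < σ i ∧ p = ξ i}) :
    PFA m n ε ξ σ (pEval q) = q := by
  induction hq using Submodule.span_induction with
  | mem p hp =>
      obtain ⟨i, hi, rfl⟩ := hp
      exact PFA_generator horthm hε hi
  | zero =>
      have : pEval (0 : Polynomial ℂ) = fun _ => (0:ℂ) := by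
        funext x; simp [pEval]
      rw [this, PFA_zero]
  | add p q' _ _ hp hq' =>
      have : pEval (p + q') = fun x => pEval p x + pEval q' x := by
        funext x; simp [pEval]
      rw [this, PFA_add, hp, hq']
  | smul c p _ hp =>
      have : pEval (c • p) = fun x => c * pEval p x := by
        funext x
        simp [pEval, Polynomial.eval_smul]
      rw [this, PFA_smul, hp, Polynomial.smul_eq_C_mul]

end Linearity
section Helpers

variable {m n : ℕ} {ε : ℝ} {ξ : Fin (n+1) → Polynomial ℂ} {σ : Fin (n+1) → ℝ}
  {f g : ℝ → ℂ} {a b : ℝ}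

lemma pEval_zero : pEval (0 : Polynomial ℂ) = fun _ => (0:ℂ) := by
  funext x; simp [pEval]

lemma mSup_zero : mSup m (fun _ => (0:ℂ)) = 0 :=
  le_antisymm (mSup_le le_rfl (by simp)) mSup_nonneg

lemma mSup_one : mSup m (fun _ => (1:ℂ)) = 1 := by
  apply le_antisymm (mSup_le zero_le_one (by simp))
  have := le_mSup (f := fun _ => (1:ℂ)) (m := m) 0
  simpa using this

lemma node_zero (hs : mSup m f = 0) (i : Fin (m+1)) : f (eqNode m i) = 0 := by
  have h1 : ‖f (eqNode m i)‖ ≤ 0 := hs ▸ le_mSup i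
  have h2 : ‖f (eqNode m i)‖ = 0 :=
    le_antisymm h1 (norm_nonneg _)
  exact norm_eq_zero.mp h2

lemma mInner_eq_zero_left (hs : mSup m f = 0) (h : ℝ → ℂ) : mInner m f h = 0 := by
  unfold mInner
  rw [Finset.sum_eq_zero, mul_zero]
  intro i _
  rw [node_zero hs i, zero_mul]

lemma PFA_of_mSup_zero (hs : mSup m f = 0) : PFA m n ε ξ σ f = 0 := by
  rw [PFA_eq]
  apply Finset.sum_eq_zero
  intro i _
  have : dcoef m n ε ξ σ f i = 0 := by
    unfold dcoef
    by_cases hi : ε < σ i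
    · rw [if_pos hi, mInner_eq_zero_left hs, zero_div]
    · rw [if_neg hi]
  rw [this, map_zero, zero_mul]

lemma mSup_scale {r : ℝ} (hr : 0 ≤ r) :
    mSup m (fun x => ((r:ℝ):ℂ) * f x) = r * mSup m f := by
  rcases eq_or_lt_of_le hr with h|h
  · rw [← h]
    simp only [Complex.ofReal_zero, zero_mul]
    rw [mSup_zero]
  · apply le_antisymm
    · apply mSup_le (mul_nonneg hr mSup_nonneg)
      intro i
      simp only [norm_mul, Complex.norm_real, Real.norm_eq_abs, abs_of_nonneg hr]
      exact mul_le_mul_of_nonneg_left (le_mSup i) hr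
    · rw [← le_div_iff₀' h]
      apply mSup_le (div_nonneg mSup_nonneg hr)
      intro i
      rw [le_div_iff₀' h]
      have := le_mSup (f := fun x => ((r:ℝ):ℂ) * f x) (m := m) i
      simpa [abs_of_nonneg hr] using this

lemma supNorm_scale {r : ℝ} (hr : 0 ≤ r) (hf : ContinuousOn f (Icc a b)) :
    supNorm a b (fun x => ((r:ℝ):ℂ) * f x) = r * supNorm a b f := by
  rcases eq_or_lt_of_le hr with h|h
  · rw [← h]
    simp only [Complex.ofReal_zero, zero_mul]
    rw [supNorm_zero]
  · apply le_antisymm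
    · apply supNorm_le (mul_nonneg hr supNorm_nonneg)
      intro x hx
      simp only [norm_mul, Complex.norm_real, Real.norm_eq_abs, abs_of_nonneg hr]
      exact mul_le_mul_of_nonneg_left (le_supNorm hf hx) hr
    · rw [← le_div_iff₀' h]
      apply supNorm_le (div_nonneg supNorm_nonneg hr)
      intro x hx
      rw [le_div_iff₀' h]
      have hc : ContinuousOn (fun x => ((r:ℝ):ℂ) * f x) (Icc a b) :=
        continuousOn_const.mul hf
      have := le_supNorm hc hx
      simpa [abs_of_nonneg hr] using this

lemma supNorm_gamma_mono {γ : ℝ} (hγ : 1 ≤ γ) (hf : ContinuousOn f (Icc (-γ) γ)) :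
    supNorm (-1) 1 f ≤ supNorm (-γ) γ f := by
  apply supNorm_le supNorm_nonneg
  intro x hx
  have hx' : x ∈ Icc (-γ) γ := ⟨le_trans (by linarith) hx.1, le_trans hx.2 hγ⟩
  exact le_supNorm hf hx'

lemma poly_zero_of_supNorm_gamma {γ : ℝ} (hγ : 1 ≤ γ) {p : Polynomial ℂ}
    (hs : supNorm (-γ) γ (pEval p) = 0) : p = 0 := by
  have hroot : ∀ x : ℝ, x ∈ Icc (-γ) γ → p.eval (x:ℂ) = 0 := by
    intro x hx
    have h1 : ‖pEval p x‖ ≤ 0 := hs ▸ le_supNorm (cont_pEval p).continuousOn hx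
    exact norm_eq_zero.mp (le_antisymm h1 (norm_nonneg _))
  by_contra hp
  have hlt : -γ < γ := by linarith
  have hinf : Set.Infinite ((fun x : ℝ => (x:ℂ)) '' (Icc (-γ) γ)) :=
    Set.Infinite.image (Set.injOn_of_injective Complex.ofReal_injective)
      (Set.Icc_infinite hlt)
  have hsub : ((fun x : ℝ => (x:ℂ)) '' (Icc (-γ) γ)) ⊆ p.rootSet ℂ := by
    rintro z ⟨x, hx, rfl⟩
    rw [Polynomial.mem_rootSet]
    exact ⟨hp, by simpa [Polynomial.aeval_def] using hroot x hx⟩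
  exact hinf.mono hsub (Polynomial.rootSet_finite p ℂ)
end Helpers
/-- **Accuracy and conditioning of polynomial frame approximation** (Lemma 3.1). -/
theorem stmt_5
    (ε γ : ℝ) (hε : 0 < ε) (hγ : 1 ≤ γ)
    (n m : ℕ) (hn : 1 ≤ n) (hm : 1 ≤ m)
    -- a doubly orthogonal family coming from the SVD of the least-squares matrix
    (ξ : Fin (n + 1) → Polynomial ℂ) (σ : Fin (n + 1) → ℝ)
    (hξdeg : ∀ i, (ξ i).natDegree ≤ n) (hσ : ∀ i, 0 ≤ σ i)
    (horth : ∀ i j, innerI (-γ) γ (pEval (ξ i)) (pEval (ξ j)) = if i = j then 1 else 0)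
    (horthm : ∀ i j, mInner m (pEval (ξ i)) (pEval (ξ j)) =
      if i = j then ((σ i : ℂ)) ^ 2 else 0)
    (C₁ C₂ : ℝ)
    (hC₁ : C₁ = sSup {r : ℝ | ∃ p : Polynomial ℂ,
      p ∈ Submodule.span ℂ {q : Polynomial ℂ | ∃ i, ε < σ i ∧ q = ξ i} ∧
      mSup m (pEval p) ≤ 1 ∧ r = supNorm (-1) 1 (pEval p)})
    (hC₂ : C₂ = sSup {r : ℝ | ∃ p : Polynomial ℂ, p.natDegree ≤ n ∧
      supNorm (-γ) γ (pEval p) ≤ 1 / ε ∧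
      r = supNorm (-1) 1 (pEval (p - PFA m n ε ξ σ (pEval p)))}) :
    -- the accuracy bound
    (∀ f : ℝ → ℂ, ContinuousOn f (Icc (-1) 1) → ∀ p : Polynomial ℂ, p.natDegree ≤ n →
      supNorm (-1) 1 (fun x => f x - pEval (PFA m n ε ξ σ f) x) ≤
        (1 + Real.sqrt (m + 1) * C₁) * supNorm (-1) 1 (fun x => f x - pEval p x)
          + C₂ * ε * supNorm (-γ) γ (pEval p))
    -- the conditioning bounds
    ∧ C₁ ≤ kappaLin m (fun f => pEval (PFA m n ε ξ σ f))
    ∧ kappaLin m (fun f => pEval (PFA m n ε ξ σ f)) ≤ Real.sqrt (m + 1) * C₁ := by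
  classical
  set V : Submodule ℂ (Polynomial ℂ) :=
    Submodule.span ℂ {q : Polynomial ℂ | ∃ i, ε < σ i ∧ q = ξ i} with hV
  set S₁ : Set ℝ := {r : ℝ | ∃ p : Polynomial ℂ, p ∈ V ∧
      mSup m (pEval p) ≤ 1 ∧ r = supNorm (-1) 1 (pEval p)} with hS₁
  set S₂ : Set ℝ := {r : ℝ | ∃ p : Polynomial ℂ, p.natDegree ≤ n ∧
      supNorm (-γ) γ (pEval p) ≤ 1 / ε ∧
      r = supNorm (-1) 1 (pEval (p - PFA m n ε ξ σ (pEval p)))} with hS₂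
  set K' : ℝ := ∑ i : Fin (n+1), supNorm (-1) 1 (pEval (ξ i)) with hK'
  have hK'nn : 0 ≤ K' := Finset.sum_nonneg fun i _ => supNorm_nonneg
  set B : ℝ := Real.sqrt 2 / ε * K' with hB
  have hBnn : 0 ≤ B := mul_nonneg (div_nonneg (Real.sqrt_nonneg 2) hε.le) hK'nn
  have hsupPFA : ∀ f : ℝ → ℂ,
      supNorm (-1) 1 (pEval (PFA m n ε ξ σ f)) ≤ B * mSup m f :=
    fun f => supNorm_PFA horthm hε
  -- S₁ is bounded above by B
  have hS₁bdd : BddAbove S₁ := by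
    refine ⟨B, ?_⟩
    rintro r ⟨p, hp, hm1, rfl⟩
    have heq : supNorm (-1) 1 (pEval p)
        = supNorm (-1) 1 (pEval (PFA m n ε ξ σ (pEval p))) := by
      rw [PFA_proj horthm hε hp]
    rw [heq]
    calc supNorm (-1) 1 (pEval (PFA m n ε ξ σ (pEval p))) ≤ B * mSup m (pEval p) := hsupPFA _
      _ ≤ B * 1 := mul_le_mul_of_nonneg_left hm1 hBnn
      _ = B := mul_one B
  have h0S₁ : (0:ℝ) ∈ S₁ := by
    refine ⟨0, Submodule.zero_mem V, ?_, ?_⟩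
    · rw [pEval_zero, mSup_zero]; exact zero_le_one
    · rw [pEval_zero, supNorm_zero]
  have hC₁nn : 0 ≤ C₁ := by rw [hC₁]; exact le_csSup hS₁bdd h0S₁
  -- the norm bound on the span
  have hspan : ∀ q ∈ V, supNorm (-1) 1 (pEval q) ≤ C₁ * mSup m (pEval q) := by
    intro q hq
    rcases eq_or_lt_of_le (mSup_nonneg (f := pEval q) (m := m)) with hs|hs
    · have hq0 : q = 0 := by
        rw [← PFA_proj horthm hε hq, PFA_of_mSup_zero hs.symm]
      rw [hq0, pEval_zero, supNorm_zero, mSup_zero, mul_zero]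
    · have hsne : mSup m (pEval q) ≠ 0 := hs.ne'
      set s := mSup m (pEval q) with hsdef
      have hscale : pEval (((s⁻¹:ℝ):ℂ) • q) = fun x => ((s⁻¹:ℝ):ℂ) * pEval q x := by
        funext x; simp [pEval, Polynomial.eval_smul]
      have hmem : s⁻¹ * supNorm (-1) 1 (pEval q) ∈ S₁ := by
        refine ⟨((s⁻¹:ℝ):ℂ) • q, Submodule.smul_mem _ _ hq, ?_, ?_⟩
        · rw [hscale, mSup_scale (inv_nonneg.mpr hs.le), inv_mul_cancel₀ hsne]
        · rw [hscale, supNorm_scale (inv_nonneg.mpr hs.le) (cont_pEval q).continuousOn]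
      have hle : s⁻¹ * supNorm (-1) 1 (pEval q) ≤ C₁ := by
        rw [hC₁]; exact le_csSup hS₁bdd hmem
      calc supNorm (-1) 1 (pEval q) = s * (s⁻¹ * supNorm (-1) 1 (pEval q)) := by
            field_simp
        _ ≤ s * C₁ := mul_le_mul_of_nonneg_left hle hs.le
        _ = C₁ * s := mul_comm _ _
  -- elements of the kappa set are bounded
  have hKel : ∀ r ∈ {r : ℝ | ∃ f : ℝ → ℂ, ContinuousOn f (Icc (-1) 1) ∧ mSup m f ≠ 0 ∧
      r = supNorm (-1) 1 ((fun f => pEval (PFA m n ε ξ σ f)) f) / mSup m f},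
      r ≤ Real.sqrt (m+1) * C₁ := by
    rintro r ⟨f, hf, hf0, rfl⟩
    have hms : 0 < mSup m f := lt_of_le_of_ne mSup_nonneg (Ne.symm hf0)
    have h1 : supNorm (-1) 1 (pEval (PFA m n ε ξ σ f))
        ≤ C₁ * mSup m (pEval (PFA m n ε ξ σ f)) := hspan _ PFA_mem_span
    have h2 : mSup m (pEval (PFA m n ε ξ σ f)) ≤ Real.sqrt (m+1) * mSup m f :=
      mSup_PFA horthm hε
    have h3 : supNorm (-1) 1 (pEval (PFA m n ε ξ σ f))
        ≤ Real.sqrt (m+1) * C₁ * mSup m f := by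
      calc supNorm (-1) 1 (pEval (PFA m n ε ξ σ f))
          ≤ C₁ * (Real.sqrt (m+1) * mSup m f) := h1.trans (mul_le_mul_of_nonneg_left h2 hC₁nn)
        _ = Real.sqrt (m+1) * C₁ * mSup m f := by ring
    rw [div_le_iff₀ hms]
    exact h3
  have hKbdd : BddAbove {r : ℝ | ∃ f : ℝ → ℂ, ContinuousOn f (Icc (-1) 1) ∧ mSup m f ≠ 0 ∧
      r = supNorm (-1) 1 ((fun f => pEval (PFA m n ε ξ σ f)) f) / mSup m f} :=
    ⟨Real.sqrt (m+1) * C₁, hKel⟩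
  have hκub : kappaLin m (fun f => pEval (PFA m n ε ξ σ f)) ≤ Real.sqrt (m+1) * C₁ := by
    unfold kappaLin
    exact Real.sSup_le hKel (mul_nonneg (Real.sqrt_nonneg _) hC₁nn)
  -- kappa is nonnegative
  have hκnn : 0 ≤ kappaLin m (fun f => pEval (PFA m n ε ξ σ f)) := by
    have hmem : supNorm (-1) 1 ((fun f => pEval (PFA m n ε ξ σ f)) (fun _ => (1:ℂ)))
        / mSup m (fun _ => (1:ℂ)) ∈ {r : ℝ | ∃ f : ℝ → ℂ, ContinuousOn f (Icc (-1) 1) ∧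
          mSup m f ≠ 0 ∧ r = supNorm (-1) 1 ((fun f => pEval (PFA m n ε ξ σ f)) f) / mSup m f} :=
      ⟨fun _ => (1:ℂ), continuousOn_const, by rw [mSup_one]; exact one_ne_zero, rfl⟩
    have h1 : 0 ≤ supNorm (-1) 1 ((fun f => pEval (PFA m n ε ξ σ f)) (fun _ => (1:ℂ)))
        / mSup m (fun _ => (1:ℂ)) := div_nonneg supNorm_nonneg mSup_nonneg
    have h2 := le_csSup hKbdd hmem
    unfold kappaLin
    exact le_trans h1 h2
  -- C₁ ≤ kappa
  have hκlb : C₁ ≤ kappaLin m (fun f => pEval (PFA m n ε ξ σ f)) := by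
    rw [hC₁]
    apply Real.sSup_le _ hκnn
    rintro r ⟨p, hp, hm1, rfl⟩
    rcases eq_or_lt_of_le (mSup_nonneg (f := pEval p) (m := m)) with hs|hs
    · have hp0 : p = 0 := by
        rw [← PFA_proj horthm hε hp, PFA_of_mSup_zero hs.symm]
      rw [hp0, pEval_zero, supNorm_zero]
      exact hκnn
    · have hmem : supNorm (-1) 1 ((fun f => pEval (PFA m n ε ξ σ f)) (pEval p))
          / mSup m (pEval p) ∈ {r : ℝ | ∃ f : ℝ → ℂ, ContinuousOn f (Icc (-1) 1) ∧
            mSup m f ≠ 0 ∧ r = supNorm (-1) 1 ((fun f => pEval (PFA m n ε ξ σ f)) f) / mSup m f} :=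
        ⟨pEval p, (cont_pEval p).continuousOn, hs.ne', rfl⟩
      have h2 := le_csSup hKbdd hmem
      have h3 : supNorm (-1) 1 (pEval p)
          ≤ supNorm (-1) 1 ((fun f => pEval (PFA m n ε ξ σ f)) (pEval p)) / mSup m (pEval p) := by
        simp only
        rw [PFA_proj horthm hε hp, le_div_iff₀ hs]
        exact mul_le_of_le_one_right supNorm_nonneg hm1
      unfold kappaLin
      exact h3.trans h2
  -- S₂ bounded above
  have hS₂bdd : BddAbove S₂ := by
    refine ⟨1/ε + B * (1/ε), ?_⟩
    rintro r ⟨p, hpd, hps, rfl⟩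
    have hcγ : ContinuousOn (pEval p) (Icc (-γ) γ) := (cont_pEval p).continuousOn
    have h1 : supNorm (-1) 1 (pEval p) ≤ 1/ε := (supNorm_gamma_mono hγ hcγ).trans hps
    have h2 : mSup m (pEval p) ≤ 1/ε :=
      (mSup_le_supNorm hm (cont_pEval p).continuousOn).trans h1
    have h3 : supNorm (-1) 1 (pEval (PFA m n ε ξ σ (pEval p))) ≤ B * (1/ε) :=
      (hsupPFA _).trans (mul_le_mul_of_nonneg_left h2 hBnn)
    have hnn : (0:ℝ) ≤ 1/ε + B * (1/ε) :=
      add_nonneg (by positivity) (mul_nonneg hBnn (by positivity))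
    apply supNorm_le hnn
    intro x hx
    have hev : pEval (p - PFA m n ε ξ σ (pEval p)) x
        = pEval p x - pEval (PFA m n ε ξ σ (pEval p)) x := by simp [pEval]
    rw [hev]
    calc ‖pEval p x - pEval (PFA m n ε ξ σ (pEval p)) x‖
        ≤ ‖pEval p x‖ + ‖pEval (PFA m n ε ξ σ (pEval p)) x‖ :=
          norm_sub_le _ _
      _ ≤ 1/ε + B * (1/ε) := add_le_add
          ((le_supNorm (cont_pEval p).continuousOn hx).trans h1)
          ((le_supNorm (cont_pEval _).continuousOn hx).trans h3)
  have h0S₂ : (0:ℝ) ∈ S₂ := by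
    refine ⟨0, by simp, ?_, ?_⟩
    · rw [pEval_zero, supNorm_zero]; positivity
    · have hz : (0:Polynomial ℂ) - PFA m n ε ξ σ (pEval 0) = 0 := by
        rw [pEval_zero, PFA_zero, sub_zero]
      rw [hz, pEval_zero, supNorm_zero]
  have hC₂nn : 0 ≤ C₂ := by rw [hC₂]; exact le_csSup hS₂bdd h0S₂
  -- usage of C₂
  have hC₂use : ∀ p : Polynomial ℂ, p.natDegree ≤ n →
      supNorm (-1) 1 (pEval (p - PFA m n ε ξ σ (pEval p)))
        ≤ C₂ * ε * supNorm (-γ) γ (pEval p) := by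
    intro p hpd
    rcases eq_or_lt_of_le (supNorm_nonneg (a := -γ) (b := γ) (f := pEval p)) with hs|hs
    · have hp0 : p = 0 := poly_zero_of_supNorm_gamma hγ hs.symm
      subst hp0
      have hz : (0:Polynomial ℂ) - PFA m n ε ξ σ (pEval 0) = 0 := by
        rw [pEval_zero, PFA_zero, sub_zero]
      rw [hz, pEval_zero, supNorm_zero, supNorm_zero, mul_zero]
    · set s := supNorm (-γ) γ (pEval p) with hsdef
      set c : ℝ := (ε * s)⁻¹ with hc
      have hcpos : 0 < c := inv_pos.mpr (mul_pos hε hs)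
      set p' : Polynomial ℂ := Polynomial.C ((c:ℝ):ℂ) * p with hp'
      have hdeg' : p'.natDegree ≤ n := le_trans (Polynomial.natDegree_C_mul_le _ _) hpd
      have hev' : pEval p' = fun x => ((c:ℝ):ℂ) * pEval p x := by
        funext x; simp [pEval, hp']
      have hsup' : supNorm (-γ) γ (pEval p') = 1/ε := by
        rw [hev', supNorm_scale hcpos.le (cont_pEval p).continuousOn, ← hsdef, hc]
        field_simp
      have hPFA' : PFA m n ε ξ σ (pEval p') = Polynomial.C ((c:ℝ):ℂ) * PFA m n ε ξ σ (pEval p) := by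
        rw [hev', PFA_smul]
      have hdiff : p' - PFA m n ε ξ σ (pEval p')
          = Polynomial.C ((c:ℝ):ℂ) * (p - PFA m n ε ξ σ (pEval p)) := by
        rw [hPFA', hp', mul_sub]
      have hevd : pEval (p' - PFA m n ε ξ σ (pEval p'))
          = fun x => ((c:ℝ):ℂ) * pEval (p - PFA m n ε ξ σ (pEval p)) x := by
        funext x
        rw [hdiff]
        simp [pEval]
      have hrq : supNorm (-1) 1 (pEval (p' - PFA m n ε ξ σ (pEval p')))
          = c * supNorm (-1) 1 (pEval (p - PFA m n ε ξ σ (pEval p))) := by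
        rw [hevd, supNorm_scale hcpos.le (cont_pEval _).continuousOn]
      have hmem : c * supNorm (-1) 1 (pEval (p - PFA m n ε ξ σ (pEval p))) ∈ S₂ :=
        ⟨p', hdeg', le_of_eq hsup', hrq.symm⟩
      have hle : c * supNorm (-1) 1 (pEval (p - PFA m n ε ξ σ (pEval p))) ≤ C₂ := by
        rw [hC₂]; exact le_csSup hS₂bdd hmem
      have hfin := mul_le_mul_of_nonneg_left hle (le_of_lt (mul_pos hε hs))
      have heq2 : (ε * s) * (c * supNorm (-1) 1 (pEval (p - PFA m n ε ξ σ (pEval p))))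
          = supNorm (-1) 1 (pEval (p - PFA m n ε ξ σ (pEval p))) := by
        rw [hc]; field_simp
      rw [heq2] at hfin
      calc supNorm (-1) 1 (pEval (p - PFA m n ε ξ σ (pEval p))) ≤ ε * s * C₂ := hfin
        _ = C₂ * ε * s := by ring
  -- accuracy
  refine ⟨?_, hκlb, hκub⟩
  intro f hf p hpd
  set T1 := supNorm (-1) 1 (fun x => f x - pEval p x) with hT1
  have hT1nn : 0 ≤ T1 := supNorm_nonneg
  have hcont1 : ContinuousOn (fun x => f x - pEval p x) (Icc (-1) 1) :=
    hf.sub (cont_pEval p).continuousOn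
  have h2 : supNorm (-1) 1 (pEval (PFA m n ε ξ σ (fun y => f y - pEval p y)))
      ≤ Real.sqrt (m+1) * C₁ * T1 := by
    calc supNorm (-1) 1 (pEval (PFA m n ε ξ σ (fun y => f y - pEval p y)))
        ≤ C₁ * mSup m (pEval (PFA m n ε ξ σ (fun y => f y - pEval p y))) :=
          hspan _ PFA_mem_span
      _ ≤ C₁ * (Real.sqrt (m+1) * mSup m (fun y => f y - pEval p y)) :=
          mul_le_mul_of_nonneg_left (mSup_PFA horthm hε) hC₁nn
      _ ≤ C₁ * (Real.sqrt (m+1) * T1) := by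
          apply mul_le_mul_of_nonneg_left _ hC₁nn
          exact mul_le_mul_of_nonneg_left (mSup_le_supNorm hm hcont1) (Real.sqrt_nonneg _)
      _ = Real.sqrt (m+1) * C₁ * T1 := by ring
  have h3 := hC₂use p hpd
  have hRHSnn : 0 ≤ (1 + Real.sqrt (m+1) * C₁) * T1 + C₂ * ε * supNorm (-γ) γ (pEval p) := by
    apply add_nonneg
    · exact mul_nonneg (by positivity) hT1nn
    · exact mul_nonneg (mul_nonneg hC₂nn hε.le) supNorm_nonneg
  apply supNorm_le hRHSnn
  intro x hx
  have hsplit : f x - pEval (PFA m n ε ξ σ f) x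
      = (f x - pEval p x) - pEval (PFA m n ε ξ σ (fun y => f y - pEval p y)) x
        + (pEval p x - pEval (PFA m n ε ξ σ (pEval p)) x) := by
    have h := PFA_sub (m := m) (n := n) (ε := ε) (ξ := ξ) (σ := σ)
      (f := f) (g := pEval p)
    have h2' : pEval (PFA m n ε ξ σ (fun y => f y - pEval p y)) x
        = pEval (PFA m n ε ξ σ f) x - pEval (PFA m n ε ξ σ (pEval p)) x := by
      rw [h]; simp [pEval]
    rw [h2']; ring
  show ‖f x - pEval (PFA m n ε ξ σ f) x‖ ≤ _
  rw [hsplit]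
  have hb1 : ‖f x - pEval p x‖ ≤ T1 := le_supNorm hcont1 hx
  have hb2 : ‖pEval (PFA m n ε ξ σ (fun y => f y - pEval p y)) x‖
      ≤ Real.sqrt (m+1) * C₁ * T1 :=
    (le_supNorm (cont_pEval _).continuousOn hx).trans h2
  have hb3 : ‖pEval p x - pEval (PFA m n ε ξ σ (pEval p)) x‖
      ≤ C₂ * ε * supNorm (-γ) γ (pEval p) := by
    have hev : pEval p x - pEval (PFA m n ε ξ σ (pEval p)) x
        = pEval (p - PFA m n ε ξ σ (pEval p)) x := by simp [pEval]
    rw [hev]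
    exact (le_supNorm (cont_pEval _).continuousOn hx).trans h3
  calc ‖(f x - pEval p x)
        - pEval (PFA m n ε ξ σ (fun y => f y - pEval p y)) x
        + (pEval p x - pEval (PFA m n ε ξ σ (pEval p)) x)‖
      ≤ ‖(f x - pEval p x)
          - pEval (PFA m n ε ξ σ (fun y => f y - pEval p y)) x‖
        + ‖pEval p x - pEval (PFA m n ε ξ σ (pEval p)) x‖ :=
        norm_add_le _ _
    _ ≤ ‖f x - pEval p x‖
        + ‖pEval (PFA m n ε ξ σ (fun y => f y - pEval p y)) x‖
        + ‖pEval p x - pEval (PFA m n ε ξ σ (pEval p)) x‖ := by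
        have := norm_sub_le (f x - pEval p x)
          (pEval (PFA m n ε ξ σ (fun y => f y - pEval p y)) x)
        linarith
    _ ≤ T1 + Real.sqrt (m+1) * C₁ * T1 + C₂ * ε * supNorm (-γ) γ (pEval p) := by
        linarith [hb1, hb2, hb3]
    _ = (1 + Real.sqrt (m+1) * C₁) * T1 + C₂ * ε * supNorm (-γ) γ (pEval p) := by ring

end
end

section
/- Let a < b be real numbers, r ≥ 1 an integer, and f an r-times continuously differentiable function on [a,b]. Then there exists a polynomial p ∈ ℙ_{r−1} such that ‖f − p‖_{[a,b],∞} ≤ (2/r!)·((b−a)/4)^r·‖f^{(r)}‖_{[a,b],∞}. In particular, the best uniform approximation error E_{r−1}(f) = inf_{p∈ℙ_{r−1}} ‖f − p‖_{[a,b],∞} satisfies E_{r−1}(f) ≤ (2/r!)·((b−a)/4)^r·‖f^{(r)}‖_{[a,b],∞}. -/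
open Polynomial Set

noncomputable section

namespace Stmt13Aux


lemma T2_eq : Chebyshev.T ℝ 2 = 2 * X * X - 1 := by
  have := Chebyshev.T_add_two ℝ 0
  simpa [Chebyshev.T_zero, Chebyshev.T_one] using this

lemma cheb_deg (n : ℕ) : (Chebyshev.T ℝ (n+1)).coeff (n+1) = 2^n ∧
    (Chebyshev.T ℝ (n+1)).natDegree ≤ n+1 := by
  induction n using Nat.twoStepInduction with
  | zero =>
    refine ⟨by simp [Chebyshev.T_one, coeff_X_one], ?_⟩
    simpa [Chebyshev.T_one] using natDegree_X_le
  | one =>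
    have h2 : Chebyshev.T ℝ ((1:ℕ)+1) = 2 * X * X - 1 := by
      norm_num [T2_eq]
    rw [h2]
    constructor
    · rw [show ((2*X*X : ℝ[X])) = 2*(X^2) by ring, coeff_sub, coeff_ofNat_mul]
      simp [coeff_X_pow, coeff_one]
    · have : natDegree (2 * X * X - 1 : ℝ[X]) ≤ 2 := by compute_degree
      simpa using this
  | more n ih2 ih1 =>
    have e3 : ((n+2:ℕ):ℤ)+1 = (n:ℤ)+1+2 := by push_cast; ring
    have e2 : ((n+1:ℕ):ℤ)+1 = (n:ℤ)+1+1 := by push_cast; ring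
    have key := Chebyshev.T_add_two ℝ ((n:ℤ)+1)
    rw [e3, key, ← e2]
    obtain ⟨hc1, hd1⟩ := ih1
    obtain ⟨hc0, hd0⟩ := ih2
    constructor
    · rw [coeff_sub, coeff_eq_zero_of_natDegree_lt (lt_of_le_of_lt hd0 (by omega)),
        mul_assoc, coeff_ofNat_mul, show (n+2)+1 = ((n+1)+1)+1 by ring,
        coeff_X_mul, hc1]
      ring
    · apply (natDegree_sub_le _ _).trans
      simp only [max_le_iff]
      constructor
      · apply (natDegree_mul_le).trans
        have h1 : natDegree (2 * X : ℝ[X]) ≤ 1 := by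
          apply (natDegree_mul_le).trans; simp
        omega
      · omega

lemma cheb_natDegree (n : ℕ) : (Chebyshev.T ℝ (n+1)).natDegree = n+1 := by
  obtain ⟨hc, hd⟩ := cheb_deg n
  refine le_antisymm hd (le_natDegree_of_ne_zero ?_)
  rw [hc]; positivity



/-- Chebyshev node values in [-1,1]. -/
def chebNode (r k : ℕ) : ℝ := Real.cos ((2*k+1)*Real.pi/(2*r))

lemma theta_mem {r k : ℕ} (hr : 1 ≤ r) (hk : k < r) :
    (2*(k:ℝ)+1)*Real.pi/(2*r) ∈ Icc (0:ℝ) Real.pi := by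
  have hπ := Real.pi_pos
  have hrp : (0:ℝ) < r := by exact_mod_cast hr
  constructor
  · positivity
  · rw [div_le_iff₀ (by positivity)]
    have : (2*(k:ℝ)+1) ≤ 2*r := by
      have : (k:ℝ) + 1 ≤ r := by exact_mod_cast hk
      linarith
    nlinarith

lemma chebNode_strictAnti {r : ℕ} (hr : 1 ≤ r) {j k : ℕ} (hj : j < k) (hk : k < r) :
    chebNode r k < chebNode r j := by
  have hπ := Real.pi_pos
  have hrp : (0:ℝ) < r := by exact_mod_cast hr
  apply Real.strictAntiOn_cos (theta_mem hr (hj.trans hk)) (theta_mem hr hk)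
  apply div_lt_div_of_pos_right ?_ (by positivity)
  have : (j:ℝ) < k := by exact_mod_cast hj
  nlinarith [Real.pi_pos]

lemma chebNode_root {r : ℕ} (hr : 1 ≤ r) (k : ℕ) :
    (Chebyshev.T ℝ r).eval (chebNode r k) = 0 := by
  unfold chebNode
  rw [Chebyshev.T_real_cos]
  have hrp : (0:ℝ) < r := by exact_mod_cast hr
  have : ((r:ℤ):ℝ) * ((2*(k:ℝ)+1)*Real.pi/(2*r)) = k*Real.pi + Real.pi/2 := by
    push_cast
    field_simp
  rw [this, Real.cos_add_pi_div_two, Real.sin_nat_mul_pi, neg_zero]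

end Stmt13Aux

namespace Stmt13Aux

lemma chebNode_injOn {r : ℕ} (hr : 1 ≤ r) :
    Function.Injective (fun i : Fin r => chebNode r i) := by
  intro i j hij
  by_contra hne
  rcases lt_or_gt_of_ne (fun h : (i:ℕ) = (j:ℕ) => hne (Fin.ext h)) with h | h
  · exact absurd hij (ne_of_gt (chebNode_strictAnti hr h j.2))
  · exact absurd hij.symm (ne_of_gt (chebNode_strictAnti hr h i.2))

lemma cheb_factor (r : ℕ) (hr : 1 ≤ r) :
    Chebyshev.T ℝ r = C ((2:ℝ)^(r-1)) * ∏ i : Fin r, (X - C (chebNode r i)) := by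
  obtain ⟨m, rfl⟩ : ∃ m, r = m+1 := ⟨r-1, (Nat.succ_pred_eq_of_pos hr).symm⟩
  set W : ℝ[X] := ∏ i : Fin (m+1), (X - C (chebNode (m+1) i)) with hW
  have hWm : W.Monic := monic_prod_of_monic _ _ fun i _ => monic_X_sub_C _
  have hWdeg : W.natDegree = m+1 := by
    rw [hW, natDegree_prod _ _ (fun i _ => X_sub_C_ne_zero _)]
    simp [natDegree_X_sub_C]
  obtain ⟨hTc, hTd⟩ := cheb_deg m
  have hcoeff : ((C ((2:ℝ)^(m+1-1)) * W).coeff (m+1)) = 2^m := by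
    rw [coeff_C_mul]
    have := hWm.leadingCoeff
    rw [leadingCoeff, hWdeg] at this
    rw [this]
    norm_num
  set D : ℝ[X] := Chebyshev.T ℝ (m+1) - C ((2:ℝ)^(m+1-1)) * W with hD
  have hDdeg : D.natDegree ≤ m+1 := by
    apply (natDegree_sub_le _ _).trans
    simp only [max_le_iff]
    exact ⟨by exact_mod_cast hTd, (natDegree_C_mul_le _ _).trans hWdeg.le⟩
  have hDcoeff : D.coeff (m+1) = 0 := by
    rw [hD, coeff_sub, hcoeff]
    rw [show ((m:ℤ)+1) = ((m:ℕ):ℤ)+1 by push_cast; ring] at *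
    rw [hTc]; ring
  have hDdeg' : D.natDegree < m+1 := by
    rcases eq_or_ne D 0 with h0 | h0
    · simp [h0]
    · rcases lt_or_eq_of_le hDdeg with h | h
      · exact h
      · exfalso
        have := leadingCoeff_ne_zero.mpr h0
        rw [leadingCoeff, h, hDcoeff] at this
        exact this rfl
  have hDzero : D = 0 := by
    apply eq_zero_of_natDegree_lt_card_of_eval_eq_zero D (chebNode_injOn hr)
    · intro i
      rw [hD, eval_sub, eval_mul, eval_prod]
      rw [show ((m:ℤ)+1) = (((m+1:ℕ)):ℤ) by push_cast; ring]
      rw [chebNode_root hr]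
      have : ∏ j : Fin (m+1), (Polynomial.X - C (chebNode (m+1) j)).eval (chebNode (m+1) i) = 0 := by
        apply Finset.prod_eq_zero (Finset.mem_univ i)
        simp
      simp only [eval_sub, eval_X, eval_C] at this ⊢
      rw [this]; ring
    · simpa using hDdeg'
  have := sub_eq_zero.mp hDzero
  exact this

lemma cheb_abs_le (n : ℕ) {u : ℝ} (hu : u ∈ Icc (-1:ℝ) 1) :
    |(Chebyshev.T ℝ n).eval u| ≤ 1 := by
  have hu' : u = Real.cos (Real.arccos u) := (Real.cos_arccos hu.1 hu.2).symm
  rw [hu', Chebyshev.T_real_cos]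
  exact Real.abs_cos_le_one _



/-- Iterated Rolle: if `A 0` has `n+1` increasing zeros in `[a,b]`, and each `A k`
is continuous on `[a,b]` with derivative `A (k+1)` on `(a,b)`, then `A n` vanishes
somewhere in `[a,b]`. -/
lemma multi_rolle {a b : ℝ} (n : ℕ) (A : ℕ → ℝ → ℝ)
    (hcont : ∀ k ≤ n, ContinuousOn (A k) (Icc a b))
    (hder : ∀ k < n, ∀ x ∈ Ioo a b, HasDerivAt (A k) (A (k+1) x) x)
    (z : ℕ → ℝ) (hzmono : ∀ i < n, z i < z (i+1))
    (hzmem : ∀ i ≤ n, z i ∈ Icc a b) (hz0 : ∀ i ≤ n, A 0 (z i) = 0) :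
    ∃ ξ ∈ Icc a b, A n ξ = 0 := by
  induction n generalizing A z with
  | zero => exact ⟨z 0, hzmem 0 le_rfl, hz0 0 le_rfl⟩
  | succ n ih =>
    have H : ∀ i, i < n+1 → ∃ c, c ∈ Ioo (z i) (z (i+1)) ∧ A 1 c = 0 := by
      intro i hi
      have hlt : z i < z (i+1) := hzmono i hi
      have hsub : Icc (z i) (z (i+1)) ⊆ Icc a b :=
        Icc_subset_Icc (hzmem i (by omega)).1 (hzmem (i+1) (by omega)).2
      have hsub' : Ioo (z i) (z (i+1)) ⊆ Ioo a b :=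
        Ioo_subset_Ioo (hzmem i (by omega)).1 (hzmem (i+1) (by omega)).2
      obtain ⟨c, hc, hc0⟩ := exists_hasDerivAt_eq_zero hlt
        ((hcont 0 (by omega)).mono hsub)
        (by rw [hz0 i (by omega), hz0 (i+1) (by omega)])
        (fun x hx => hder 0 (by omega) x (hsub' hx))
      exact ⟨c, hc, hc0⟩
    choose! w hw1 hw2 using H
    have hwmem : ∀ i ≤ n, w i ∈ Icc a b := fun i hi =>
      ⟨(hzmem i (by omega)).1.trans (hw1 i (by omega)).1.le,
       le_trans (hw1 i (by omega)).2.le (hzmem (i+1) (by omega)).2⟩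
    refine ih (fun k => A (k+1)) (fun k hk => hcont (k+1) (by omega))
      (fun k hk x hx => hder (k+1) (by omega) x hx) w ?_ hwmem
      (fun i hi => hw2 i (by omega))
    intro i hi
    calc w i < z (i+1) := (hw1 i (by omega)).2
    _ < w (i+1) := (hw1 (i+1) (by omega)).1


lemma iteratedDeriv_polyeval (k : ℕ) (P : ℝ[X]) :
    iteratedDeriv k (fun y => P.eval y) = fun y => (derivative^[k] P).eval y := by
  induction k with
  | zero => simp
  | succ k ih =>
    rw [iteratedDeriv_succ, ih]
    funext y
    rw [Function.iterate_succ_apply']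
    exact Polynomial.deriv (𝕜 := ℝ) (p := derivative^[k] P)

lemma iterate_derivative_monic {r : ℕ} {W : ℝ[X]} (hWm : W.Monic) (hWdeg : W.natDegree = r) :
    derivative^[r] W = C (r.factorial : ℝ) := by
  ext m
  rw [coeff_iterate_derivative, coeff_C]
  rcases Nat.eq_zero_or_pos m with rfl | hm
  · simp only [zero_add, Nat.descFactorial_self, if_pos rfl]
    have : W.coeff r = 1 := by
      have := hWm.leadingCoeff
      rwa [leadingCoeff, hWdeg] at this
    rw [this]
    simp
  · have h0 : W.coeff (m + r) = 0 := by
      apply coeff_eq_zero_of_natDegree_lt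
      omega
    rw [h0, if_neg (by omega)]
    simp

/-- Interpolation remainder bound, real-valued case. -/
lemma real_remainder {a b : ℝ} (hab : a < b) {r : ℕ} (hr : 1 ≤ r)
    {φ : ℝ → ℝ} (hφ : ContDiffOn ℝ r φ (Icc a b))
    {M : ℝ} (hM : ∀ y ∈ Icc a b, |iteratedDerivWithin r φ (Icc a b) y| ≤ M)
    {t : Fin r → ℝ} (ht : Function.Injective t) (htmem : ∀ i, t i ∈ Icc a b)
    {q : ℝ[X]} (hq : q.natDegree < r) (hinterp : ∀ i, q.eval (t i) = φ (t i))
    {x : ℝ} (hx : x ∈ Icc a b) :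
    |φ x - q.eval x| ≤ M / r.factorial * |∏ i, (x - t i)| := by
  have huniq : UniqueDiffOn ℝ (Icc a b) := uniqueDiffOn_Icc hab
  have hM0 : 0 ≤ M := le_trans (abs_nonneg _) (hM a (left_mem_Icc.mpr hab.le))
  have hfact : (0:ℝ) < r.factorial := by exact_mod_cast r.factorial_pos
  -- trivial case : x is a node
  by_cases hxt : ∃ i, x = t i
  · obtain ⟨i, rfl⟩ := hxt
    rw [hinterp i, sub_self, abs_zero]  -- careful: φ x - q.eval x; hinterp: q.eval = φ
    positivity
  push_neg at hxt
  have hprod_ne : (∏ i, (x - t i)) ≠ 0 := by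
    apply Finset.prod_ne_zero_iff.mpr
    intro i _
    exact sub_ne_zero.mpr (hxt i)
  set c : ℝ := (φ x - q.eval x) / ∏ i, (x - t i) with hc
  set W : ℝ[X] := ∏ i : Fin r, (X - C (t i)) with hWdef
  have hWm : W.Monic := monic_prod_of_monic _ _ fun i _ => monic_X_sub_C _
  have hWdeg : W.natDegree = r := by
    rw [hWdef, natDegree_prod _ _ (fun i _ => X_sub_C_ne_zero _)]
    simp [natDegree_X_sub_C]
  have hWeval : ∀ y : ℝ, W.eval y = ∏ i, (y - t i) := by
    intro y; rw [hWdef, eval_prod]; simp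
  set P : ℝ[X] := q + C c * W with hPdef
  set A : ℕ → ℝ → ℝ := fun k y =>
    iteratedDerivWithin k φ (Icc a b) y - (derivative^[k] P).eval y with hA
  -- zeros of A 0
  classical
  set Z : Finset ℝ := insert x (Finset.image t Finset.univ) with hZ
  have hxZ : x ∉ Finset.image t Finset.univ := by
    simp only [Finset.mem_image, Finset.mem_univ, true_and, not_exists]
    intro i h
    exact hxt i h.symm
  have hZcard : Z.card = r + 1 := by
    rw [hZ, Finset.card_insert_of_notMem hxZ, Finset.card_image_of_injective _ ht]
    simp
  have hZmem : ∀ y ∈ Z, y ∈ Icc a b := by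
    intro y hy
    rw [hZ, Finset.mem_insert] at hy
    rcases hy with rfl | hy
    · exact hx
    · obtain ⟨i, -, rfl⟩ := Finset.mem_image.mp hy
      exact htmem i
  have hZzero : ∀ y ∈ Z, A 0 y = 0 := by
    intro y hy
    have h0 : A 0 y = φ y - P.eval y := by
      simp [hA]
    rw [hZ, Finset.mem_insert] at hy
    rcases hy with rfl | hy
    · rw [h0, hPdef]
      simp only [eval_add, eval_mul, eval_C, hWeval]
      rw [hc]
      field_simp
      ring
    · obtain ⟨i, -, rfl⟩ := Finset.mem_image.mp hy
      rw [h0, hPdef]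
      simp only [eval_add, eval_mul, eval_C, hWeval]
      have : ∏ j, (t i - t j) = 0 :=
        Finset.prod_eq_zero (Finset.mem_univ i) (by simp)
      rw [this, hinterp i]
      ring
  -- sorted enumeration of Z
  set e := Z.orderIsoOfFin hZcard with he
  set z : ℕ → ℝ := fun i => if h : i < r + 1 then (e ⟨i, h⟩ : ℝ) else 0 with hz
  have hzmono : ∀ i < r, z i < z (i+1) := by
    intro i hi
    rw [hz]
    simp only [dif_pos (by omega : i < r+1), dif_pos (by omega : i+1 < r+1)]
    have := e.strictMono (show (⟨i, by omega⟩ : Fin (r+1)) < ⟨i+1, by omega⟩ by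
      simp [Fin.lt_def])
    exact_mod_cast this
  have hzZ : ∀ i ≤ r, z i ∈ Z := by
    intro i hi
    rw [hz]
    simp only [dif_pos (by omega : i < r+1)]
    exact (e ⟨i, by omega⟩).2
  -- continuity and differentiability of A
  have hcont : ∀ k ≤ r, ContinuousOn (A k) (Icc a b) := by
    intro k hk
    apply ContinuousOn.sub
    · exact hφ.continuousOn_iteratedDerivWithin (by exact_mod_cast hk) huniq
    · exact (Polynomial.continuous _).continuousOn
  have hder : ∀ k < r, ∀ y ∈ Ioo a b, HasDerivAt (A k) (A (k+1) y) y := by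
    intro k hk y hy
    have hmem : y ∈ Icc a b := Ioo_subset_Icc_self hy
    have hnhds : Icc a b ∈ nhds y := Icc_mem_nhds hy.1 hy.2
    have hdiff : DifferentiableAt ℝ (iteratedDerivWithin k φ (Icc a b)) y :=
      ((hφ.differentiableOn_iteratedDerivWithin (by exact_mod_cast hk) huniq) y hmem
        ).differentiableAt hnhds
    have h1 : HasDerivAt (iteratedDerivWithin k φ (Icc a b))
        (iteratedDerivWithin (k+1) φ (Icc a b) y) y := by
      have := hdiff.hasDerivAt
      rwa [show deriv (iteratedDerivWithin k φ (Icc a b)) y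
            = iteratedDerivWithin (k+1) φ (Icc a b) y by
        rw [iteratedDerivWithin_succ, derivWithin_of_mem_nhds hnhds]] at this
    have h2 : HasDerivAt (fun y => (derivative^[k] P).eval y)
        ((derivative^[k+1] P).eval y) y := by
      rw [Function.iterate_succ_apply']
      exact (derivative^[k] P).hasDerivAt y
    exact h1.sub h2
  obtain ⟨ξ, hξmem, hξ⟩ := multi_rolle r A hcont hder z hzmono
    (fun i hi => hZmem _ (hzZ i hi)) (fun i hi => hZzero _ (hzZ i hi))
  -- compute A r
  have hPr : derivative^[r] P = C (c * r.factorial) := by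
    rw [hPdef]
    rw [iterate_map_add]
    rw [Polynomial.iterate_derivative_eq_zero (by omega : q.natDegree < r)]
    rw [Polynomial.iterate_derivative_C_mul, iterate_derivative_monic hWm hWdeg]
    rw [← C_mul]
    ring_nf
  rw [hA] at hξ
  simp only [hPr, eval_C] at hξ
  have hval : iteratedDerivWithin r φ (Icc a b) ξ = c * r.factorial := by linarith
  have hcb : |c| ≤ M / r.factorial := by
    have := hM ξ hξmem
    rw [hval, abs_mul, abs_of_pos hfact] at this
    rw [le_div_iff₀ hfact]
    linarith [abs_nonneg c]
  have hrepr : φ x - q.eval x = c * ∏ i, (x - t i) := by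
    rw [hc]; field_simp
  rw [hrepr, abs_mul]
  exact mul_le_mul_of_nonneg_right hcb (abs_nonneg _)

lemma iteratedDerivWithin_clm_comp (ψ : ℂ →L[ℝ] ℝ) {f : ℝ → ℂ} {s : Set ℝ} {n : ℕ}
    (hf : ContDiffOn ℝ n f s) (hs : UniqueDiffOn ℝ s) {x : ℝ} (hx : x ∈ s) :
    iteratedDerivWithin n (fun y => ψ (f y)) s x = ψ (iteratedDerivWithin n f s x) := by
  rw [iteratedDerivWithin_eq_iteratedFDerivWithin, iteratedDerivWithin_eq_iteratedFDerivWithin,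
    show (fun y => ψ (f y)) = (⇑ψ ∘ f) from rfl,
    ψ.iteratedFDerivWithin_comp_left (hf x hx) hs hx le_rfl]
  rfl

lemma mul_ofReal_re (w : ℂ) (t : ℝ) : (w * (t:ℂ)).re = w.re * t := by
  simp [Complex.mul_re]

end Stmt13Aux

open Stmt13Aux

/-- **A lemma on best approximation** (Lemma 4.3): if `f ∈ C^r([a,b])`, then there is a
polynomial `p` of degree at most `r-1` with
`‖f - p‖_{[a,b],∞} ≤ (2/r!)·((b-a)/4)^r·‖f⁽ʳ⁾‖_{[a,b],∞}`; in particular the best uniform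
approximation error `E_{r-1}(f)` is bounded by the same quantity. -/
theorem stmt_13
    (a b : ℝ) (hab : a < b) (r : ℕ) (hr : 1 ≤ r)
    (f : ℝ → ℂ) (hf : ContDiffOn ℝ r f (Icc a b)) :
    (∃ p : Polynomial ℂ, p.natDegree ≤ r - 1 ∧
      ∀ x ∈ Icc a b, ‖f x - p.eval (x : ℂ)‖ ≤
        (2 / (r.factorial : ℝ)) * ((b - a) / 4) ^ r *
          supNorm a b (iteratedDerivWithin r f (Icc a b)))
    ∧ sInf {e : ℝ | ∃ p : Polynomial ℂ, p.natDegree ≤ r - 1 ∧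
        e = supNorm a b (fun x => f x - p.eval (x : ℂ))} ≤
      (2 / (r.factorial : ℝ)) * ((b - a) / 4) ^ r *
        supNorm a b (iteratedDerivWithin r f (Icc a b)) := by

  classical
  have huniq : UniqueDiffOn ℝ (Icc a b) := uniqueDiffOn_Icc hab
  have hfact : (0:ℝ) < r.factorial := by exact_mod_cast r.factorial_pos
  set M : ℝ := supNorm a b (iteratedDerivWithin r f (Icc a b)) with hMdef
  have hM0 : 0 ≤ M := Real.iSup_nonneg fun _ => norm_nonneg _
  -- bound for the iterated derivative
  have hM : ∀ x ∈ Icc a b, ‖iteratedDerivWithin r f (Icc a b) x‖ ≤ M := by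
    have hcont : ContinuousOn (iteratedDerivWithin r f (Icc a b)) (Icc a b) :=
      hf.continuousOn_iteratedDerivWithin (by exact_mod_cast le_rfl) huniq
    obtain ⟨C, hC⟩ := isCompact_Icc.exists_bound_of_continuousOn hcont
    have hbdd : BddAbove (Set.range fun x : Icc a b =>
        ‖iteratedDerivWithin r f (Icc a b) x‖) := by
      refine ⟨C, ?_⟩
      rintro y ⟨⟨x, hx⟩, rfl⟩
      simpa using hC x hx
    intro x hx
    exact le_ciSup hbdd (⟨x, hx⟩ : Icc a b)
  -- geometric setup
  set mid : ℝ := (a+b)/2 with hmd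
  set h : ℝ := (b-a)/2 with hhd
  have hh : 0 < h := by rw [hhd]; linarith
  set t : Fin r → ℝ := fun i => mid + h * chebNode r i with htd
  have htinj : Function.Injective t := by
    intro i j hij
    apply chebNode_injOn hr
    have : h * chebNode r i = h * chebNode r j := by
      have := hij; rw [htd] at this; simpa using this
    simpa using mul_left_cancel₀ (ne_of_gt hh) this
  have hnode_mem : ∀ i : Fin r, chebNode r i ∈ Icc (-1:ℝ) 1 :=
    fun i => ⟨Real.neg_one_le_cos _, Real.cos_le_one _⟩
  have htmem : ∀ i, t i ∈ Icc a b := by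
    intro i
    obtain ⟨h1, h2⟩ := hnode_mem i
    rw [htd]
    constructor
    · simp only [hmd, hhd]; nlinarith
    · simp only [hmd, hhd]; nlinarith
  -- product bound
  have key : ∀ x ∈ Icc a b, |∏ i : Fin r, (x - t i)| ≤ 2 * ((b-a)/4)^r := by
    intro x hx
    set v : ℝ := (x - mid)/h with hvd
    have hv : v ∈ Icc (-1:ℝ) 1 := by
      rw [hvd]
      constructor
      · rw [le_div_iff₀ hh]; obtain ⟨h1', h2'⟩ := hx; simp only [hmd, hhd]; linarith
      · rw [div_le_iff₀ hh]; obtain ⟨h1', h2'⟩ := hx; simp only [hmd, hhd]; linarith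
  -- CONTINUATION: key product bound and main proof
    obtain ⟨r', hr'⟩ : ∃ r', r = r'+1 := ⟨r-1, (Nat.succ_pred_eq_of_pos hr).symm⟩
    have hfac : ∀ i : Fin r, x - t i = h * (v - chebNode r i) := by
      intro i; rw [htd, hvd]; field_simp; ring
    have hprod : ∏ i : Fin r, (x - t i) = h^r * ∏ i : Fin r, (v - chebNode r i) := by
      rw [Finset.prod_congr rfl (fun i _ => hfac i), Finset.prod_mul_distrib]
      simp
    have hTv : (Chebyshev.T ℝ r).eval v
        = 2^(r-1) * ∏ i : Fin r, (v - chebNode r i) := by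
      rw [cheb_factor r hr]
      simp [eval_prod]
    have habs := cheb_abs_le r hv
    have h2r : (0:ℝ) < 2^(r-1) := by positivity
    have hPv : |∏ i : Fin r, (v - chebNode r i)| ≤ 1/2^(r-1) := by
      rw [le_div_iff₀ h2r]
      calc |∏ i : Fin r, (v - chebNode r i)| * 2^(r-1)
          = |2^(r-1) * ∏ i : Fin r, (v - chebNode r i)| := by
            rw [abs_mul, abs_of_pos h2r]; ring
        _ = |(Chebyshev.T ℝ r).eval v| := by rw [hTv]
        _ ≤ 1 := habs
    rw [hprod, abs_mul, abs_of_pos (pow_pos hh r)]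
    have : h^r * |∏ i : Fin r, (v - chebNode r i)| ≤ h^r * (1/2^(r-1)) :=
      mul_le_mul_of_nonneg_left hPv (le_of_lt (pow_pos hh r))
    refine this.trans (le_of_eq ?_)
    subst hr'
    have h4 : ((b-a)/4) = ((b-a)/2)/2 := by ring
    rw [hhd, h4, Nat.add_sub_cancel]
    rw [div_pow ((b-a)/2) 2 (r'+1), pow_succ (2:ℝ) r']
    ring
  -- Lagrange interpolation polynomial
  have hvinj : Set.InjOn (fun i : Fin r => ((t i : ℝ) : ℂ)) ↑(Finset.univ : Finset (Fin r)) := by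
    intro i _ j _ hij
    exact htinj (Complex.ofReal_inj.mp (by simpa using hij))
  set p : Polynomial ℂ := Lagrange.interpolate Finset.univ
    (fun i : Fin r => ((t i : ℝ) : ℂ)) (fun i => f (t i)) with hpd
  have hpdeg : p.degree < (r : ℕ) := by
    have := Lagrange.degree_interpolate_lt (fun i => f (t i)) hvinj
    simpa [hpd] using this
  have hnatdeg : p.natDegree ≤ r - 1 := by
    rcases eq_or_ne p 0 with h0 | h0
    · simp [h0]
    · have := (natDegree_lt_iff_degree_lt h0).mpr hpdeg
      omega
  have hpnode : ∀ i : Fin r, p.eval ((t i : ℝ) : ℂ) = f (t i) :=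
    fun i => Lagrange.eval_interpolate_at_node _ hvinj (Finset.mem_univ i)
  -- the pointwise bound
  have main : ∀ x ∈ Icc a b, ‖f x - p.eval (x:ℂ)‖ ≤
      (2 / (r.factorial : ℝ)) * ((b-a)/4)^r * M := by
    intro x hx
    have hRHS0 : 0 ≤ (2 / (r.factorial : ℝ)) * ((b-a)/4)^r * M := by
      apply mul_nonneg (mul_nonneg (by positivity) (pow_nonneg (by linarith) r)) hM0
    set e : ℂ := f x - p.eval (x:ℂ) with hed
    rcases eq_or_ne e 0 with he | he
    · rw [he]; simpa using hRHS0
    have heabs : (0:ℝ) < ‖e‖ := norm_pos_iff.mpr he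
    set u : ℂ := (starRingEnd ℂ) e / (‖e‖ : ℂ) with hud
    have hue : u * e = (‖e‖ : ℂ) := by
      rw [hud]
      have : (starRingEnd ℂ) e * e = ((‖e‖ : ℝ) : ℂ)^2 := by
        rw [mul_comm, Complex.mul_conj, Complex.normSq_eq_norm_sq]
        push_cast; ring
      rw [div_mul_eq_mul_div, this, sq, mul_div_assoc,
        div_self (Complex.ofReal_ne_zero.mpr (ne_of_gt heabs)), mul_one]
    have huabs : ‖u‖ = 1 := by
      rw [hud, norm_div, Complex.norm_conj, Complex.norm_of_nonneg (norm_nonneg e),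
        div_self (ne_of_gt heabs)]
    set ψ : ℂ →L[ℝ] ℝ := Complex.reCLM.comp ((ContinuousLinearMap.mul ℝ ℂ) u) with hψd
    have hψ : ∀ z : ℂ, ψ z = (u * z).re := fun z => rfl
    set φ : ℝ → ℝ := fun y => ψ (f y) with hφd
    have hφ : ContDiffOn ℝ r φ (Icc a b) := ψ.contDiff.comp_contDiffOn hf
    have hφM : ∀ y ∈ Icc a b, |iteratedDerivWithin r φ (Icc a b) y| ≤ M := by
      intro y hy
      rw [hφd, iteratedDerivWithin_clm_comp ψ hf huniq hy, hψ]
      calc |(u * iteratedDerivWithin r f (Icc a b) y).re|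
          ≤ ‖u * iteratedDerivWithin r f (Icc a b) y‖ :=
            Complex.abs_re_le_norm _
        _ = ‖iteratedDerivWithin r f (Icc a b) y‖ := by
            rw [norm_mul, huabs, one_mul]
        _ ≤ M := hM y hy
    -- real polynomial q with eval y = (u * p.eval y).re
    set q : ℝ[X] := ∑ n ∈ Finset.range (p.natDegree + 1),
      C ((u * p.coeff n).re) * X^n with hqd
    have hqdeg : q.natDegree < r := by
      have : q.natDegree ≤ r - 1 := by
        apply natDegree_sum_le_of_forall_le
        intro n hn
        apply (natDegree_C_mul_le _ _).trans
        rw [natDegree_X_pow]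
        have := Finset.mem_range.mp hn
        omega
      omega
    have hqeval : ∀ y : ℝ, q.eval y = (u * p.eval ((y:ℝ):ℂ)).re := by
      intro y
      conv_rhs => rw [eval_eq_sum_range]
      rw [Finset.mul_sum, Complex.re_sum, hqd, eval_finset_sum]
      apply Finset.sum_congr rfl
      intro n _
      rw [eval_mul, eval_C, eval_pow, eval_X, ← mul_assoc,
        show ((y:ℂ))^n = (((y^n : ℝ)):ℂ) by push_cast; ring,
        mul_ofReal_re]
    have hqnode : ∀ i : Fin r, q.eval (t i) = φ (t i) := by
      intro i
      rw [hqeval, hpnode i]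
      simp only [hφd]
      rw [hψ]
    have hrem := real_remainder hab hr hφ hφM htinj htmem hqdeg hqnode hx
    have hLHS : φ x - q.eval x = ‖e‖ := by
      simp only [hφd]
      rw [hψ, hqeval, ← Complex.sub_re, ← mul_sub, ← hed, hue,
        Complex.ofReal_re]
    rw [hLHS, abs_of_pos heabs] at hrem
    have hkey := key x hx
    calc ‖e‖ ≤ M / r.factorial * |∏ i : Fin r, (x - t i)| := hrem
      _ ≤ M / r.factorial * (2 * ((b-a)/4)^r) := by
          apply mul_le_mul_of_nonneg_left hkey (by positivity)
      _ = (2 / (r.factorial : ℝ)) * ((b-a)/4)^r * M := by ring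
  refine ⟨⟨p, hnatdeg, main⟩, ?_⟩
  -- the infimum bound
  have hnei : Nonempty (Icc a b) := Set.Nonempty.to_subtype (nonempty_Icc.mpr hab.le)
  apply csInf_le_of_le (b := supNorm a b (fun x => f x - p.eval (x:ℂ)))
  · refine ⟨0, ?_⟩
    rintro y ⟨p', -, rfl⟩
    exact Real.iSup_nonneg fun _ => norm_nonneg _
  · exact ⟨p, hnatdeg, rfl⟩
  · exact ciSup_le fun x => main x x.2


end
end

section
/- Let n, k ∈ ℕ and δ ∈ (0,1) with 1 ≤ k ≤ n·√((1−δ²)/2), and let x be real with |x| ≤ δ. For m ≥ 1 set c_{m,k} = binom(k−1+m, 2m)·((2m−1)!!)². Then Σ_{m=1}^{k−1} c_{m,k} / ( (1−x²)^m · ∏_{s=1}^{m}(n²−s²) ) < 1/√π. -/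
open Finset

noncomputable section

/-- The constant `c_{m,k} = C(k-1+m, 2m)·((2m-1)!!)²` from the Schaeffer–Duffin/Shadrin
expression for `D_{n,k}`. -/
def cmk (m k : ℕ) : ℝ :=
  ((k - 1 + m).choose (2 * m) : ℝ) * (Nat.doubleFactorial (2 * m - 1) : ℝ) ^ 2

lemma fact_double (m : ℕ) :
    2 ^ m * m.factorial * Nat.doubleFactorial (2 * m - 1) = (2 * m).factorial := by
  cases m with
  | zero => simp
  | succ p =>
    have h2 : 2 * (p + 1) - 1 = 2 * p + 1 := by omega
    have hf : (2 * (p + 1)).factorial = (2 * (p + 1)).doubleFactorial * (2 * p + 1).doubleFactorial := by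
      rw [show 2 * (p + 1) = (2 * p + 1) + 1 by ring]
      exact Nat.factorial_eq_mul_doubleFactorial _
    rw [h2, hf, Nat.doubleFactorial_two_mul]

lemma dF_le (n0 : ℕ) : ∀ m, m ≤ n0 →
    (n0 + m).descFactorial (2 * m) ≤ ∏ s ∈ Icc 1 m, ((n0 + 1) ^ 2 - s ^ 2) := by
  intro m
  induction m with
  | zero => simp
  | succ p ih =>
    intro h
    have hp : p ≤ n0 := by omega
    have e1 : 2 * (p + 1) = (2 * p + 1) + 1 := by ring
    have e2 : n0 + (p + 1) = (n0 + p) + 1 := by ring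
    rw [e1, e2, Nat.succ_descFactorial_succ, Nat.descFactorial_succ]
    have e3 : n0 + p - 2 * p = n0 - p := by omega
    rw [e3, Finset.prod_Icc_succ_top (by omega : 1 ≤ p + 1)]
    have key : (n0 + p + 1) * (n0 - p) ≤ (n0 + 1) ^ 2 - (p + 1) ^ 2 := by
      rw [Nat.sq_sub_sq]
      have e4 : n0 + 1 - (p + 1) = n0 - p := by omega
      rw [e4]
      exact Nat.mul_le_mul_right _ (by omega)
    calc (n0 + p + 1) * ((n0 - p) * (n0 + p).descFactorial (2 * p))
        = ((n0 + p + 1) * (n0 - p)) * (n0 + p).descFactorial (2 * p) := by ring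
      _ ≤ ((n0 + 1) ^ 2 - (p + 1) ^ 2) * ∏ s ∈ Icc 1 p, ((n0 + 1) ^ 2 - s ^ 2) :=
          Nat.mul_le_mul key (ih hp)
      _ = (∏ s ∈ Icc 1 p, ((n0 + 1) ^ 2 - s ^ 2)) * ((n0 + 1) ^ 2 - (p + 1) ^ 2) := by ring

lemma two_cB_le (m : ℕ) (hm : 1 ≤ m) : 2 * Nat.centralBinom m ≤ 4 ^ m := by
  induction m with
  | zero => omega
  | succ p ih =>
    rcases Nat.eq_or_lt_of_le hm with h | h
    · simp [← h, Nat.centralBinom]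
    · have hp : 1 ≤ p := by omega
      have key := Nat.succ_mul_centralBinom_succ p
      have h2 : (p + 1) * (2 * Nat.centralBinom (p + 1)) ≤ (p + 1) * 4 ^ (p + 1) := by
        calc (p + 1) * (2 * Nat.centralBinom (p + 1))
            = 2 * ((p + 1) * Nat.centralBinom (p + 1)) := by ring
          _ = 2 * (2 * (2 * p + 1) * Nat.centralBinom p) := by rw [key]
          _ = (2 * p + 1) * 2 * (2 * Nat.centralBinom p) := by ring
          _ ≤ (2 * p + 2) * 2 * 4 ^ p :=
              Nat.mul_le_mul (Nat.mul_le_mul_right _ (by omega)) (ih hp)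
          _ = (p + 1) * 4 ^ (p + 1) := by ring
      exact Nat.le_of_mul_le_mul_left h2 (by omega)

lemma nat_key (k m : ℕ) (hk : 1 ≤ k) (hm : m ≤ k - 1) :
    4 ^ m * ((k - 1 + m).choose (2 * m) * (Nat.doubleFactorial (2 * m - 1)) ^ 2) * (m.factorial) ^ 2
      ≤ Nat.centralBinom m * (m.factorial) ^ 2 * ∏ s ∈ Icc 1 m, (k ^ 2 - s ^ 2) := by
  have h1 : 4 ^ m * ((k - 1 + m).choose (2 * m) * (Nat.doubleFactorial (2 * m - 1)) ^ 2) * (m.factorial) ^ 2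
      = (k - 1 + m).choose (2 * m) * ((2 * m).factorial) ^ 2 := by
    rw [← fact_double m, show (4:ℕ) ^ m = 2 ^ m * 2 ^ m by rw [show (4:ℕ) = 2 * 2 from rfl, mul_pow]]
    ring
  have h2 : Nat.centralBinom m * (m.factorial) ^ 2 = (2 * m).factorial := by
    have h := Nat.choose_mul_factorial_mul_factorial (show m ≤ 2 * m by omega)
    have e : 2 * m - m = m := by omega
    rw [e] at h
    rw [Nat.centralBinom, ← h]; ring
  rw [h1]
  have h3 : (k - 1 + m).descFactorial (2 * m) = (2 * m).factorial * (k - 1 + m).choose (2 * m) :=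
    Nat.descFactorial_eq_factorial_mul_choose _ _
  have h4 := dF_le (k - 1) m hm
  have e5 : k - 1 + 1 = k := by omega
  rw [e5] at h4
  calc (k - 1 + m).choose (2 * m) * ((2 * m).factorial) ^ 2
      = ((2 * m).factorial * (k - 1 + m).choose (2 * m)) * (2 * m).factorial := by ring
    _ = (k - 1 + m).descFactorial (2 * m) * (2 * m).factorial := by rw [h3]
    _ ≤ (∏ s ∈ Icc 1 m, (k ^ 2 - s ^ 2)) * (2 * m).factorial := Nat.mul_le_mul_right _ h4
    _ = Nat.centralBinom m * (m.factorial) ^ 2 * ∏ s ∈ Icc 1 m, (k ^ 2 - s ^ 2) := by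
        rw [h2]; ring

lemma geom_aux : ∀ N : ℕ, ∑ j ∈ Finset.range N, ((2:ℝ)⁻¹) ^ (j + 2) = 1/2 - (2⁻¹ : ℝ) ^ (N + 1) := by
  intro N
  induction N with
  | zero => norm_num
  | succ p ih =>
    rw [Finset.sum_range_succ, ih]
    ring

set_option maxHeartbeats 1000000 in
/-- The bound `B_{n,k}(x) < 1/√π` from the proof of the pointwise Markov inequality. -/
theorem stmt_16
    (n k : ℕ) (δ : ℝ) (hδ0 : 0 < δ) (hδ1 : δ < 1)
    (hk : 1 ≤ k) (hkn : (k : ℝ) ≤ n * Real.sqrt ((1 - δ ^ 2) / 2))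
    (x : ℝ) (hx : |x| ≤ δ) :
    ∑ m ∈ Finset.Ico 1 k,
        cmk m k / ((1 - x ^ 2) ^ m * ∏ s ∈ Finset.Icc 1 m, ((n : ℝ) ^ 2 - (s : ℝ) ^ 2)) <
      1 / Real.sqrt Real.pi := by
  have hδsq : (0:ℝ) ≤ (1 - δ ^ 2) / 2 := by nlinarith
  have hk0 : (0:ℝ) ≤ (k:ℝ) := Nat.cast_nonneg k
  have hksq : (k:ℝ) ^ 2 ≤ (n:ℝ) ^ 2 * ((1 - δ ^ 2) / 2) := by
    have h := mul_self_le_mul_self hk0 hkn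
    have hs : Real.sqrt ((1 - δ ^ 2) / 2) * Real.sqrt ((1 - δ ^ 2) / 2) = (1 - δ ^ 2) / 2 :=
      Real.mul_self_sqrt hδsq
    nlinarith [Real.sqrt_nonneg ((1 - δ ^ 2) / 2)]
  have h1δpos : (0:ℝ) < 1 - δ ^ 2 := by nlinarith
  have hkltn : k < n := by
    by_contra hcon
    push_neg at hcon
    have hn1 : (n:ℝ) ≤ (k:ℝ) := Nat.cast_le.mpr hcon
    have hkpos : (0:ℝ) < (k:ℝ) := by exact_mod_cast hk
    nlinarith
  have hx2 : x ^ 2 ≤ δ ^ 2 := by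
    nlinarith [sq_abs x, abs_nonneg x]
  have h1x : 1 - δ ^ 2 ≤ 1 - x ^ 2 := by linarith
  have h1xpos : (0:ℝ) < 1 - x ^ 2 := by linarith
  have hterm : ∀ m ∈ Finset.Ico 1 k,
      cmk m k / ((1 - x ^ 2) ^ m * ∏ s ∈ Finset.Icc 1 m, ((n : ℝ) ^ 2 - (s : ℝ) ^ 2))
        ≤ (2⁻¹ : ℝ) ^ (m + 1) := by
    intro m hm
    obtain ⟨hm1, hmk⟩ := Finset.mem_Ico.mp hm
    have hmk' : m ≤ k - 1 := by omega
    set P : ℝ := ∏ s ∈ Finset.Icc 1 m, ((n : ℝ) ^ 2 - (s : ℝ) ^ 2) with hP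
    have hPpos : 0 < P := by
      apply Finset.prod_pos
      intro s hs
      obtain ⟨hs1, hs2⟩ := Finset.mem_Icc.mp hs
      have hsn : s < n := by omega
      have hsn' : (s:ℝ) < (n:ℝ) := by exact_mod_cast hsn
      nlinarith [Nat.cast_nonneg (α := ℝ) s]
    have hQcast : ((∏ s ∈ Finset.Icc 1 m, (k ^ 2 - s ^ 2) : ℕ) : ℝ)
        = ∏ s ∈ Finset.Icc 1 m, ((k:ℝ) ^ 2 - (s:ℝ) ^ 2) := by
      rw [Nat.cast_prod]
      apply Finset.prod_congr rfl
      intro s hs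
      obtain ⟨hs1, hs2⟩ := Finset.mem_Icc.mp hs
      have hsk : s ^ 2 ≤ k ^ 2 := Nat.pow_le_pow_left (by omega) 2
      rw [Nat.cast_sub hsk]
      push_cast
      ring
    have hQnonneg : 0 ≤ ∏ s ∈ Finset.Icc 1 m, ((k:ℝ) ^ 2 - (s:ℝ) ^ 2) := by
      rw [← hQcast]; positivity
    have hcmk4 : cmk m k * 4 ^ m
        ≤ (Nat.centralBinom m : ℝ) * ∏ s ∈ Finset.Icc 1 m, ((k:ℝ) ^ 2 - (s:ℝ) ^ 2) := by
      have hnat := nat_key k m hk hmk'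
      have hcast : (4:ℝ) ^ m * cmk m k * ((m.factorial : ℝ)) ^ 2
          ≤ (Nat.centralBinom m : ℝ) * ((m.factorial : ℝ)) ^ 2
            * ((∏ s ∈ Finset.Icc 1 m, (k ^ 2 - s ^ 2) : ℕ) : ℝ) := by
        unfold cmk
        exact_mod_cast hnat
      rw [hQcast] at hcast
      have hfpos : (0:ℝ) < ((m.factorial : ℝ)) ^ 2 := by positivity
      nlinarith
    have hcB : 2 * (Nat.centralBinom m : ℝ) ≤ 4 ^ m := by
      exact_mod_cast two_cB_le m hm1
    have h4pos : (0:ℝ) < 4 ^ m := by positivity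
    have hcmk : cmk m k ≤ (∏ s ∈ Finset.Icc 1 m, ((k:ℝ) ^ 2 - (s:ℝ) ^ 2)) / 2 := by
      rw [← mul_le_mul_iff_of_pos_right h4pos]
      calc cmk m k * 4 ^ m
          ≤ (Nat.centralBinom m : ℝ) * ∏ s ∈ Finset.Icc 1 m, ((k:ℝ) ^ 2 - (s:ℝ) ^ 2) := hcmk4
        _ ≤ (4 ^ m / 2) * ∏ s ∈ Finset.Icc 1 m, ((k:ℝ) ^ 2 - (s:ℝ) ^ 2) :=
            mul_le_mul_of_nonneg_right (by linarith) hQnonneg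
        _ = (∏ s ∈ Finset.Icc 1 m, ((k:ℝ) ^ 2 - (s:ℝ) ^ 2)) / 2 * 4 ^ m := by ring
    have hQP : (∏ s ∈ Finset.Icc 1 m, ((k:ℝ) ^ 2 - (s:ℝ) ^ 2))
        ≤ ((1 - δ ^ 2) / 2) ^ m * P := by
      have hcard : (Finset.Icc 1 m).card = m := by
        rw [Nat.card_Icc]; omega
      have : ((1 - δ ^ 2) / 2) ^ m * P
          = ∏ s ∈ Finset.Icc 1 m, (((1 - δ ^ 2) / 2) * ((n:ℝ) ^ 2 - (s:ℝ) ^ 2)) := by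
        rw [Finset.prod_mul_distrib, Finset.prod_const, hcard]
      rw [this]
      apply Finset.prod_le_prod
      · intro s hs
        obtain ⟨hs1, hs2⟩ := Finset.mem_Icc.mp hs
        have hsk : s < k := by omega
        have hsk' : (s:ℝ) < (k:ℝ) := by exact_mod_cast hsk
        nlinarith [Nat.cast_nonneg (α := ℝ) s]
      · intro s hs
        obtain ⟨hs1, hs2⟩ := Finset.mem_Icc.mp hs
        have hsn : s < n := by omega
        have hsn' : (s:ℝ) < (n:ℝ) := by exact_mod_cast hsn
        have hs0 : (0:ℝ) ≤ (s:ℝ) := Nat.cast_nonneg s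
        have hhalf : (1 - δ ^ 2) / 2 ≤ 1 := by nlinarith
        nlinarith
    have hdenge : (1 - δ ^ 2) ^ m * P ≤ (1 - x ^ 2) ^ m * P := by
      apply mul_le_mul_of_nonneg_right _ hPpos.le
      exact pow_le_pow_left₀ h1δpos.le h1x m
    have hdpos : 0 < (1 - δ ^ 2) ^ m * P := mul_pos (pow_pos h1δpos m) hPpos
    calc cmk m k / ((1 - x ^ 2) ^ m * P)
        ≤ (((1 - δ ^ 2) / 2) ^ m * P / 2) / ((1 - δ ^ 2) ^ m * P) := by
          apply div_le_div₀ _ (by linarith) hdpos hdenge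
          have : (0:ℝ) ≤ ((1 - δ ^ 2) / 2) ^ m := pow_nonneg (by linarith) m
          nlinarith [hPpos.le]
      _ = (2⁻¹ : ℝ) ^ (m + 1) := by
          have hne0 : (2 * ((1 - δ ^ 2) ^ m * P) : ℝ) ≠ 0 := by
            have := hPpos
            positivity
          rw [div_div, div_eq_iff hne0, div_eq_mul_inv (1 - δ ^ 2) 2, mul_pow, pow_succ (2⁻¹:ℝ) m]
          ring
  have hsum : ∑ m ∈ Finset.Ico 1 k,
      cmk m k / ((1 - x ^ 2) ^ m * ∏ s ∈ Finset.Icc 1 m, ((n : ℝ) ^ 2 - (s : ℝ) ^ 2))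
        ≤ ∑ m ∈ Finset.Ico 1 k, (2⁻¹ : ℝ) ^ (m + 1) :=
    Finset.sum_le_sum hterm
  have hgeom : ∑ m ∈ Finset.Ico 1 k, (2⁻¹ : ℝ) ^ (m + 1) < 1 / 2 := by
    rw [Finset.sum_Ico_eq_sum_range]
    have he : ∀ j, (2⁻¹ : ℝ) ^ (1 + j + 1) = (2⁻¹ : ℝ) ^ (j + 2) := by
      intro j; congr 1; omega
    rw [Finset.sum_congr rfl (fun j _ => he j), geom_aux]
    have : (0:ℝ) < (2⁻¹ : ℝ) ^ (k - 1 + 1) := by positivity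
    linarith
  have hpi : (1:ℝ) / 2 < 1 / Real.sqrt Real.pi := by
    have hsqrtpos : (0:ℝ) < Real.sqrt Real.pi := Real.sqrt_pos.mpr Real.pi_pos
    have hsqrtlt : Real.sqrt Real.pi < 2 := by
      rw [show (2:ℝ) = Real.sqrt 4 by
        rw [show (4:ℝ) = 2 ^ 2 by norm_num, Real.sqrt_sq (by norm_num : (0:ℝ) ≤ 2)]]
      exact Real.sqrt_lt_sqrt Real.pi_pos.le (by linarith [Real.pi_lt_d2])
    exact one_div_lt_one_div_of_lt hsqrtpos hsqrtlt
  calc ∑ m ∈ Finset.Ico 1 k,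
        cmk m k / ((1 - x ^ 2) ^ m * ∏ s ∈ Finset.Icc 1 m, ((n : ℝ) ^ 2 - (s : ℝ) ^ 2))
      ≤ ∑ m ∈ Finset.Ico 1 k, (2⁻¹ : ℝ) ^ (m + 1) := hsum
    _ < 1 / 2 := hgeom
    _ < 1 / Real.sqrt Real.pi := hpi

end
end
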